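/- arXiv:0903.4581 — 6 statements merged into one kernel-verified Lean document; each statement's English description precedes it below -/
import Mathlib

section
/- Let ρ be an admissible function on a metric space X with constants C₃, k₀. Then there exists a constant C > 0 such that for all x, y ∈ X, C⁻¹ [ρ(x) + d(x,y)] ≤ ρ(y) + d(x,y) ≤ C [ρ(x) + d(x,y)]. -/
open Metric

/-- Lemma 2.1(ii): ρ(x) + d(x,y) and ρ(y) + d(x,y) are comparable. -/
theorem admissible_add_dist_comparable {X : Type*} [MetricSpace X] (ρ : X → ℝ) (C₃ k₀ : ℝ)
    (hρ : ∀ x, 0 < ρ x) (hC₃ : 0 < C₃) (hk₀ : 0 < k₀)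
    (hadm : ∀ x y : X,
      ρ y ≤ C₃ * ρ x ^ (1 / (1 + k₀)) * (ρ x + dist x y) ^ (k₀ / (1 + k₀))) :
    ∃ C > 0, ∀ x y : X,
      C⁻¹ * (ρ x + dist x y) ≤ ρ y + dist x y ∧
      ρ y + dist x y ≤ C * (ρ x + dist x y) := by
  have key : ∀ x y : X, ρ y ≤ C₃ * (ρ x + dist x y) := by
    intro x y
    have hpos : 0 < ρ x + dist x y :=
      lt_of_lt_of_le (hρ x) (le_add_of_nonneg_right dist_nonneg)
    calc ρ y ≤ C₃ * ρ x ^ (1 / (1 + k₀)) * (ρ x + dist x y) ^ (k₀ / (1 + k₀)) := hadm x y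
      _ ≤ C₃ * (ρ x + dist x y) ^ (1 / (1 + k₀)) * (ρ x + dist x y) ^ (k₀ / (1 + k₀)) := by
          gcongr
          · exact (hρ x).le
          · exact le_add_of_nonneg_right dist_nonneg
      _ = C₃ * (ρ x + dist x y) := by
          rw [mul_assoc, ← Real.rpow_add hpos]
          have h1 : 1 / (1 + k₀) + k₀ / (1 + k₀) = 1 := by
            field_simp
          rw [h1, Real.rpow_one]
  refine ⟨C₃ + 1, by linarith, fun x y => ⟨?_, ?_⟩⟩
  · have h1 : ρ x ≤ C₃ * (ρ y + dist x y) := by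
      have := key y x
      rwa [dist_comm y x] at this
    have hρy := hρ y
    have hd : (0:ℝ) ≤ dist x y := dist_nonneg
    rw [inv_mul_le_iff₀ (by linarith : (0:ℝ) < C₃ + 1)]
    nlinarith
  · have h1 := key x y
    have hρx := hρ x
    have hd : (0:ℝ) ≤ dist x y := dist_nonneg
    nlinarith
end

section
/- Let ρ be an admissible function on a metric space X with constants C₃, k₀. Then there exists a positive constant C₄ such that for all x, y ∈ X, ρ(y) ≥ C₄ [ρ(x)]^{1+k₀} [ρ(x) + d(x,y)]^{−k₀}. -/
open Metric

/-- Lemma 2.1(iii): lower bound for ρ(y) in terms of ρ(x) and d(x,y). -/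
theorem admissible_lower_bound {X : Type*} [MetricSpace X] (ρ : X → ℝ) (C₃ k₀ : ℝ)
    (hρ : ∀ x, 0 < ρ x) (hC₃ : 0 < C₃) (hk₀ : 0 < k₀)
    (hadm : ∀ x y : X,
      ρ y ≤ C₃ * ρ x ^ (1 / (1 + k₀)) * (ρ x + dist x y) ^ (k₀ / (1 + k₀))) :
    ∃ C₄ > 0, ∀ x y : X,
      C₄ * ρ x ^ (1 + k₀) * (ρ x + dist x y) ^ (-k₀) ≤ ρ y := by
  have hk1 : (0:ℝ) < 1 + k₀ := by linarith
  set K : ℝ := C₃ * (C₃ + 1) ^ (k₀ / (1 + k₀)) with hK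
  have hKpos : 0 < K := by positivity
  refine ⟨K ^ (-(1 + k₀)), by positivity, ?_⟩
  intro x y
  set a := ρ x with ha
  set b := ρ x + dist x y with hb
  have hapos : 0 < a := hρ x
  have hbpos : 0 < b := by have := dist_nonneg (x := x) (y := y); linarith
  have hab : a ≤ b := by have := dist_nonneg (x := x) (y := y); linarith
  have hA : a ^ (1 / (1 + k₀)) * b ^ (k₀ / (1 + k₀)) ≤ b := by
    calc a ^ (1 / (1 + k₀)) * b ^ (k₀ / (1 + k₀))
        ≤ b ^ (1 / (1 + k₀)) * b ^ (k₀ / (1 + k₀)) := by gcongr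
      _ = b ^ (1 / (1 + k₀) + k₀ / (1 + k₀)) := (Real.rpow_add hbpos _ _).symm
      _ = b := by rw [← add_div, div_self hk1.ne', Real.rpow_one]
  have hB : ρ y + dist y x ≤ (C₃ + 1) * b := by
    have h2 : ρ y ≤ C₃ * b := by
      calc ρ y ≤ C₃ * (a ^ (1 / (1 + k₀)) * b ^ (k₀ / (1 + k₀))) := by
            rw [← mul_assoc]; exact hadm x y
        _ ≤ C₃ * b := by gcongr
    have h3 : dist y x ≤ b := by
      rw [dist_comm]; linarith
    linarith [h2, h3]
  have hC : a ≤ K * ρ y ^ (1 / (1 + k₀)) * b ^ (k₀ / (1 + k₀)) := by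
    calc a ≤ C₃ * ρ y ^ (1 / (1 + k₀)) * (ρ y + dist y x) ^ (k₀ / (1 + k₀)) := hadm y x
      _ ≤ C₃ * ρ y ^ (1 / (1 + k₀)) * ((C₃ + 1) * b) ^ (k₀ / (1 + k₀)) := by
          have hy := (hρ y).le
          gcongr
      _ = K * ρ y ^ (1 / (1 + k₀)) * b ^ (k₀ / (1 + k₀)) := by
          rw [Real.mul_rpow (by positivity : (0:ℝ) ≤ C₃ + 1) hbpos.le, hK]; ring
  have hmain : a ^ (1 + k₀) ≤ K ^ (1 + k₀) * ρ y * b ^ k₀ := by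
    have h1 : a ^ (1 + k₀) ≤ (K * ρ y ^ (1 / (1 + k₀)) * b ^ (k₀ / (1 + k₀))) ^ (1 + k₀) := by
      have hy := (hρ y).le
      gcongr
    refine h1.trans_eq ?_
    rw [Real.mul_rpow (mul_nonneg hKpos.le (Real.rpow_nonneg (hρ y).le _)) (Real.rpow_nonneg hbpos.le _),
        Real.mul_rpow hKpos.le (Real.rpow_nonneg (hρ y).le _),
        ← Real.rpow_mul (hρ y).le, ← Real.rpow_mul hbpos.le]
    have e1 : 1 / (1 + k₀) * (1 + k₀) = 1 := by field_simp
    have e2 : k₀ / (1 + k₀) * (1 + k₀) = k₀ := by field_simp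
    rw [e1, e2, Real.rpow_one]
  have hbk : (0:ℝ) < b ^ k₀ := by positivity
  have hKk : (0:ℝ) < K ^ (1 + k₀) := by positivity
  rw [Real.rpow_neg hKpos.le, Real.rpow_neg hbpos.le]
  calc (K ^ (1 + k₀))⁻¹ * a ^ (1 + k₀) * (b ^ k₀)⁻¹
      ≤ (K ^ (1 + k₀))⁻¹ * (K ^ (1 + k₀) * ρ y * b ^ k₀) * (b ^ k₀)⁻¹ := by gcongr
    _ = ρ y := by field_simp
end

section
/- Let ρ be an admissible function on a metric space X with constants C₃, k₀, and for each integer m let X_m = {x ∈ X : 2^{−(m+1)/2} < ρ(x)/8 ≤ 2^{−m/2}}. Then there exists a positive constant C₅ such that for all R ≥ 2 and all integers m, m', if x ∈ X_m and X_{m'} ∩ B(x, 2^{−m/2} R) ≠ ∅, then |m' − m| ≤ C₅ log R. -/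
open Metric

set_option maxHeartbeats 1000000 in
/-- Lemma 2.2: if x ∈ X_m and X_{m'} meets B(x, 2^{-m/2} R), then |m' - m| ≲ log R. -/
theorem admissible_level_sets_log {X : Type*} [MetricSpace X] (ρ : X → ℝ) (C₃ k₀ : ℝ)
    (hρ : ∀ x, 0 < ρ x) (hC₃ : 0 < C₃) (hk₀ : 0 < k₀)
    (hadm : ∀ x y : X,
      ρ y ≤ C₃ * ρ x ^ (1 / (1 + k₀)) * (ρ x + dist x y) ^ (k₀ / (1 + k₀))) :
    ∃ C₅ > 0, ∀ R : ℝ, 2 ≤ R → ∀ m m' : ℤ, ∀ x : X,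
      ((2 : ℝ) ^ (-((m : ℝ) + 1) / 2) < ρ x / 8 ∧ ρ x / 8 ≤ (2 : ℝ) ^ (-(m : ℝ) / 2)) →
      (∃ y : X,
        ((2 : ℝ) ^ (-((m' : ℝ) + 1) / 2) < ρ y / 8 ∧ ρ y / 8 ≤ (2 : ℝ) ^ (-(m' : ℝ) / 2)) ∧
        y ∈ ball x ((2 : ℝ) ^ (-(m : ℝ) / 2) * R)) →
      |(m' : ℝ) - (m : ℝ)| ≤ C₅ * Real.log R := by
  have two_pos : (0:ℝ) < 2 := by norm_num
  set L2 := Real.log 2 with hL2def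
  have hL2 : 0 < L2 := Real.log_pos (by norm_num)
  set C : ℝ := max C₃ 1 with hCdef
  have hC1 : (1:ℝ) ≤ C := le_max_right _ _
  have hCC : C₃ ≤ C := le_max_left _ _
  have hCpos : (0:ℝ) < C := by linarith
  have hlogC : 0 ≤ Real.log C := Real.log_nonneg hC1
  set α : ℝ := 1/(1+k₀) with hαdef
  set β : ℝ := k₀/(1+k₀) with hβdef
  have hk1 : (0:ℝ) < 1 + k₀ := by linarith
  have hα : 0 < α := by positivity
  have hβ : 0 < β := by positivity
  have hαβ : α + β = 1 := by rw [hαdef, hβdef]; field_simp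
  have hβ1 : β ≤ 1 := by linarith
  refine ⟨(L2 + 2*(1+k₀)*Real.log C + 4*(k₀+1)*L2) / L2^2, ?_, ?_⟩
  · apply div_pos
    · nlinarith [mul_nonneg hk₀.le hlogC, mul_nonneg hk₀.le hL2.le, hlogC, hL2]
    · positivity
  rintro R hR m m' x ⟨hx1, hx2⟩ ⟨y, ⟨hy1, hy2⟩, hyball⟩
  have ha := hρ x
  have hb := hρ y
  have hR1 : (1:ℝ) ≤ R := by linarith
  have hRpos : (0:ℝ) < R := by linarith
  set LR := Real.log R with hLRdef
  have hLR : L2 ≤ LR := Real.log_le_log (by norm_num) hR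
  have hLRpos : 0 < LR := lt_of_lt_of_le hL2 hLR
  have hd0 : 0 ≤ dist x y := dist_nonneg
  -- logs of the level-set conditions
  have hxlog1 : (-((m:ℝ)+1)/2) * L2 < Real.log (ρ x) - Real.log 8 := by
    have h := Real.log_lt_log (Real.rpow_pos_of_pos two_pos _) hx1
    rwa [Real.log_rpow two_pos, Real.log_div (ne_of_gt ha) (by norm_num)] at h
  have hxlog2 : Real.log (ρ x) - Real.log 8 ≤ (-(m:ℝ)/2) * L2 := by
    have h := Real.log_le_log (by positivity) hx2
    rwa [Real.log_rpow two_pos, Real.log_div (ne_of_gt ha) (by norm_num)] at h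
  have hylog1 : (-((m':ℝ)+1)/2) * L2 < Real.log (ρ y) - Real.log 8 := by
    have h := Real.log_lt_log (Real.rpow_pos_of_pos two_pos _) hy1
    rwa [Real.log_rpow two_pos, Real.log_div (ne_of_gt hb) (by norm_num)] at h
  have hylog2 : Real.log (ρ y) - Real.log 8 ≤ (-(m':ℝ)/2) * L2 := by
    have h := Real.log_le_log (by positivity) hy2
    rwa [Real.log_rpow two_pos, Real.log_div (ne_of_gt hb) (by norm_num)] at h
  -- distance bounds
  have hdist : dist x y < (2:ℝ)^(-(m:ℝ)/2) * R := by
    rw [dist_comm]; exact mem_ball.mp hyball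
  have h2m : (2:ℝ)^(-(m:ℝ)/2) < ρ x / 4 := by
    have e : (2:ℝ)^(-(m:ℝ)/2) = 2^((1:ℝ)/2) * 2^(-((m:ℝ)+1)/2) := by
      rw [← Real.rpow_add two_pos]; congr 1; ring
    have h12 : (2:ℝ)^((1:ℝ)/2) ≤ 2 := by
      calc (2:ℝ)^((1:ℝ)/2) ≤ (2:ℝ)^(1:ℝ) :=
            Real.rpow_le_rpow_of_exponent_le (by norm_num) (by norm_num)
        _ = 2 := Real.rpow_one 2
    have hp : 0 < (2:ℝ)^((1:ℝ)/2) := Real.rpow_pos_of_pos two_pos _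
    have hq : 0 < (2:ℝ)^(-((m:ℝ)+1)/2) := Real.rpow_pos_of_pos two_pos _
    rw [e]
    have s1 := mul_lt_mul_of_pos_left hx1 hp
    have s2 : (2:ℝ)^((1:ℝ)/2) * (ρ x / 8) ≤ 2 * (ρ x / 8) :=
      mul_le_mul_of_nonneg_right h12 (by positivity)
    linarith
  have hd1 : dist x y ≤ ρ x * R := by
    have := mul_lt_mul_of_pos_right h2m hRpos
    nlinarith [hdist, mul_pos ha hRpos]
  have hax : 0 < ρ x + dist x y := by linarith
  have had : ρ x + dist x y ≤ ρ x * R^2 := by nlinarith [ha, hR, hd1, mul_pos ha hRpos]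
  have hlog_ad : Real.log (ρ x + dist x y) ≤ Real.log (ρ x) + 2 * LR := by
    have h1 : Real.log (ρ x + dist x y) ≤ Real.log (ρ x * R^2) := Real.log_le_log hax had
    rw [Real.log_mul (ne_of_gt ha) (by positivity), Real.log_pow] at h1
    push_cast at h1
    linarith
  have hC₃C : Real.log C₃ ≤ Real.log C := Real.log_le_log hC₃ hCC
  have heq1 : α * Real.log (ρ x) + β * Real.log (ρ x) = Real.log (ρ x) := by
    rw [← add_mul, hαβ, one_mul]
  -- key inequality 1 : log ρ y ≤ log C + log ρ x + 2 log R
  have hkey1 : Real.log (ρ y) ≤ Real.log C + Real.log (ρ x) + 2 * LR := by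
    have h1 : Real.log (ρ y)
        ≤ Real.log (C₃ * ρ x ^ α * (ρ x + dist x y) ^ β) := Real.log_le_log hb (hadm x y)
    rw [Real.log_mul (by positivity) (by positivity),
        Real.log_mul (ne_of_gt hC₃) (by positivity),
        Real.log_rpow ha, Real.log_rpow hax] at h1
    have h2 : β * Real.log (ρ x + dist x y) ≤ β * (Real.log (ρ x) + 2 * LR) :=
      mul_le_mul_of_nonneg_left hlog_ad hβ.le
    have h3 : β * (2 * LR) ≤ 1 * (2 * LR) :=
      mul_le_mul_of_nonneg_right hβ1 (by positivity)
    linarith [h1, h2, h3, heq1, hC₃C]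
  -- key inequality 2 : log ρ x ≤ (1+k₀) log C + log ρ y + 2 k₀ log R
  have hkey2 : Real.log (ρ x) ≤ (1+k₀) * Real.log C + Real.log (ρ y) + 2 * k₀ * LR := by
    rcases le_or_gt (ρ y) (ρ x) with hba | hba
    · have hbx : 0 < ρ y + dist x y := by linarith
      have hbd2 : ρ y + dist x y ≤ ρ x * R^2 := by linarith
      have hlog_bd : Real.log (ρ y + dist x y) ≤ Real.log (ρ x) + 2 * LR := by
        have h1 : Real.log (ρ y + dist x y) ≤ Real.log (ρ x * R^2) :=
          Real.log_le_log hbx hbd2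
        rw [Real.log_mul (ne_of_gt ha) (by positivity), Real.log_pow] at h1
        push_cast at h1
        linarith
      have hadm2 := hadm y x
      rw [dist_comm] at hadm2
      have h1 : Real.log (ρ x)
          ≤ Real.log (C₃ * ρ y ^ α * (ρ y + dist x y) ^ β) := Real.log_le_log ha hadm2
      rw [Real.log_mul (by positivity) (by positivity),
          Real.log_mul (ne_of_gt hC₃) (by positivity),
          Real.log_rpow hb, Real.log_rpow hbx] at h1
      have h2 : β * Real.log (ρ y + dist x y) ≤ β * (Real.log (ρ x) + 2 * LR) :=
        mul_le_mul_of_nonneg_left hlog_bd hβ.le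
      have h3 : α * Real.log (ρ x) ≤ Real.log C + α * Real.log (ρ y) + 2 * β * LR := by
        linarith [h1, h2, heq1, hC₃C]
      have hmul := mul_le_mul_of_nonneg_left h3 hk1.le
      have e3 : (1+k₀) * (α * Real.log (ρ x)) = Real.log (ρ x) := by
        rw [hαdef]; field_simp
      have e4 : (1+k₀) * (α * Real.log (ρ y)) = Real.log (ρ y) := by
        rw [hαdef]; field_simp
      have e5 : (1+k₀) * (2 * β * LR) = 2 * k₀ * LR := by
        rw [hβdef]; field_simp
      linarith [hmul, e3, e4, e5]
    · have h1 : Real.log (ρ x) < Real.log (ρ y) := Real.log_lt_log ha hba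
      linarith [h1, hlogC, mul_nonneg hk₀.le hlogC, mul_nonneg hk₀.le hLRpos.le]
  -- combine
  have hA : ((m':ℝ) - m) * L2 < L2 + 2*(1+k₀)*Real.log C + 4*k₀*LR := by
    linarith [hxlog1, hkey2, hylog2]
  have hB : ((m:ℝ) - m') * L2 < L2 + 2*Real.log C + 4*LR := by
    linarith [hylog1, hkey1, hxlog2]
  rw [abs_le]
  have hL2sq : (0:ℝ) < L2^2 := by positivity
  constructor
  · have h : ((m:ℝ) - m') ≤ (L2 + 2*(1+k₀)*Real.log C + 4*(k₀+1)*L2) / L2^2 * LR := by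
      rw [div_mul_eq_mul_div, le_div_iff₀ hL2sq]
      have hmul := mul_le_mul_of_nonneg_right hB.le hL2.le
      linarith [hmul, mul_nonneg hlogC (sub_nonneg.2 hLR),
        mul_nonneg (mul_nonneg hk₀.le hlogC) hLRpos.le,
        mul_nonneg hL2.le (sub_nonneg.2 hLR),
        mul_nonneg (mul_nonneg hk₀.le hL2.le) hLRpos.le,
        mul_pos hL2 hLRpos]
    linarith
  · rw [div_mul_eq_mul_div, le_div_iff₀ hL2sq]
    have hmul := mul_le_mul_of_nonneg_right hA.le hL2.le
    linarith [hmul, mul_nonneg hlogC (sub_nonneg.2 hLR),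
      mul_nonneg (mul_nonneg hk₀.le hlogC) (sub_nonneg.2 hLR),
      mul_nonneg hL2.le (sub_nonneg.2 hLR),
      mul_pos hL2 hLRpos]
end

section
/- Let ρ be an admissible function with constants C₃, k₀, let C' > 0, and suppose 2^{−k} ≥ ρ(x). Then there exists a constant C̃₀ ≥ 1 (depending only on C', C₃, k₀ and any fixed C̃) such that: if d(x,u) ≥ C̃₀ 2^{−k} and d(u,z) < C' ρ(u), then d(x,z) ≥ d(x,u)/2 ≥ (C̃₀/2) 2^{−k}. -/
open Metric

/-- The claim in the proof of Theorem 3.1: if 2^{-k} ≥ ρ(x), d(x,u) ≥ C̃₀ 2^{-k} and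
d(u,z) < C' ρ(u), then d(x,z) ≥ d(x,u)/2 ≥ (C̃₀/2) 2^{-k}. -/
theorem localization_separation {X : Type*} [MetricSpace X] (ρ : X → ℝ) (C₃ k₀ C' : ℝ)
    (hρ : ∀ x, 0 < ρ x) (hC₃ : 0 < C₃) (hk₀ : 0 < k₀) (hC' : 0 < C')
    (hadm : ∀ x y : X,
      ρ y ≤ C₃ * ρ x ^ (1 / (1 + k₀)) * (ρ x + dist x y) ^ (k₀ / (1 + k₀))) :
    ∃ C₀ : ℝ, 1 ≤ C₀ ∧ ∀ (x : X) (k : ℤ), ρ x ≤ (2 : ℝ) ^ (-k) →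
      ∀ u z : X, C₀ * (2 : ℝ) ^ (-k) ≤ dist x u → dist u z < C' * ρ u →
        dist x u / 2 ≤ dist x z ∧ (C₀ / 2) * (2 : ℝ) ^ (-k) ≤ dist x u / 2 := by
  have hk1 : (0:ℝ) < 1 + k₀ := by linarith
  set a : ℝ := 1 / (1 + k₀) with ha_def
  set b : ℝ := k₀ / (1 + k₀) with hb_def
  have ha_pos : 0 < a := by positivity
  have hb_nonneg : 0 ≤ b := by positivity
  have hab : a + b = 1 := by rw [ha_def, hb_def]; field_simp
  have hb1 : b ≤ 1 := by rw [hb_def, div_le_one hk1]; linarith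
  set M : ℝ := 4 * C₃ * C' with hM
  have hMpos : 0 < M := by positivity
  refine ⟨max 1 (M ^ (1 + k₀)), le_max_left _ _, ?_⟩
  set C₀ := max 1 (M ^ (1 + k₀)) with hC₀
  intro x k hx u z hdu hdz
  have hC₀1 : (1:ℝ) ≤ C₀ := le_max_left _ _
  have hC₀pos : (0:ℝ) < C₀ := by linarith
  have h2k : (0:ℝ) < (2:ℝ) ^ (-k) := by positivity
  set D := dist x u with hD
  have hDpos : 0 < D := lt_of_lt_of_le (by positivity) hdu
  have hρx : ρ x ≤ D / C₀ := by
    rw [le_div_iff₀ hC₀pos]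
    calc ρ x * C₀ = C₀ * ρ x := mul_comm _ _
    _ ≤ C₀ * (2:ℝ) ^ (-k) := mul_le_mul_of_nonneg_left hx hC₀pos.le
    _ ≤ D := hdu
  have h1 : (M ^ (1 + k₀)) ^ a = M := by
    rw [← Real.rpow_mul hMpos.le]
    have : (1 + k₀) * a = 1 := by rw [ha_def]; field_simp
    rw [this, Real.rpow_one]
  have hC₀a : M ≤ C₀ ^ a := by
    calc M = (M ^ (1 + k₀)) ^ a := h1.symm
    _ ≤ C₀ ^ a := Real.rpow_le_rpow (by positivity) (le_max_right _ _) ha_pos.le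
  have hC₀apos : 0 < C₀ ^ a := by positivity
  have hρu : ρ u ≤ C₃ * 2 * D / C₀ ^ a := by
    calc ρ u ≤ C₃ * ρ x ^ a * (ρ x + D) ^ b := hadm x u
    _ ≤ C₃ * (D / C₀) ^ a * (2 * D) ^ b := by
        have hDC : D / C₀ ≤ D := by rw [div_le_iff₀ hC₀pos]; nlinarith
        have hxD : ρ x ≤ D := hρx.trans hDC
        have hx1 : ρ x ^ a ≤ (D / C₀) ^ a := Real.rpow_le_rpow (hρ x).le hρx ha_pos.le
        have hx2 : (ρ x + D) ^ b ≤ (2 * D) ^ b :=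
          Real.rpow_le_rpow (add_pos (hρ x) hDpos).le (by linarith) hb_nonneg
        exact mul_le_mul (mul_le_mul_of_nonneg_left hx1 hC₃.le) hx2
          (Real.rpow_nonneg (add_pos (hρ x) hDpos).le b) (by positivity)
    _ = C₃ * (D ^ a / C₀ ^ a) * (2 ^ b * D ^ b) := by
        rw [Real.div_rpow hDpos.le hC₀pos.le, Real.mul_rpow (by norm_num) hDpos.le]
    _ = C₃ * 2 ^ b * (D ^ a * D ^ b) / C₀ ^ a := by ring
    _ = C₃ * 2 ^ b * D / C₀ ^ a := by
        rw [← Real.rpow_add hDpos, hab, Real.rpow_one]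
    _ ≤ C₃ * 2 * D / C₀ ^ a := by
        have h2b : (2:ℝ) ^ b ≤ 2 := by
          calc (2:ℝ) ^ b ≤ (2:ℝ) ^ (1:ℝ) :=
            Real.rpow_le_rpow_of_exponent_le (by norm_num) hb1
          _ = 2 := Real.rpow_one 2
        gcongr
  have key : C' * ρ u ≤ D / 2 := by
    have h4 : C' * ρ u ≤ C' * (C₃ * 2 * D / C₀ ^ a) :=
      mul_le_mul_of_nonneg_left hρu hC'.le
    have h5 : C' * (C₃ * 2 * D / C₀ ^ a) ≤ C' * (C₃ * 2 * D / M) := by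
      gcongr
    have h6 : C' * (C₃ * 2 * D / M) = D / 2 := by
      rw [hM]; field_simp; ring
    linarith
  have htri : D ≤ dist x z + dist z u := dist_triangle x z u
  have hcomm : dist z u = dist u z := dist_comm z u
  constructor
  · linarith
  · linarith
end

section
/- Let (X,d,μ) be a doubling metric measure space, ρ admissible, and let {T_t}_{t>0} be a family of integral operators whose kernels satisfy |T_t(x,y)| ≤ C [μ(B(x,t)) + μ(B(x,d(x,y)))]⁻¹ (t/(t+d(x,y)))^{δ₂} (ρ(x)/(t+ρ(x)))^{δ₃} for some δ₂, δ₃ > 0. Then there exists C' such that for every (1,2)_ρ-atom a supported in B(y₀,r) with r < ρ(y₀), ∫_{X \ B(y₀, 4ρ(y₀))} sup_{t ≥ ρ(x)} |T_t(a)(x)| dμ(x) ≤ C'. -/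
open Metric MeasureTheory ENNReal

lemma decay_aux {δ₂ δ₃ t ρ d : ℝ} (hδ₂ : 0 < δ₂) (hδ₃ : 0 < δ₃)
    (ht : 0 < t) (hρ : 0 < ρ) (hd : 0 < d) :
    (t / (t + d)) ^ δ₂ * (ρ / (t + ρ)) ^ δ₃ ≤ (ρ / (ρ + d)) ^ min δ₂ δ₃ := by
  set ε := min δ₂ δ₃ with hε
  have hε0 : 0 < ε := lt_min hδ₂ hδ₃
  have hs0 : 0 < t / (t + d) := div_pos ht (by linarith)
  have hs1 : t / (t + d) ≤ 1 := by
    rw [div_le_one (by linarith)]; linarith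
  have hu0 : 0 < ρ / (t + ρ) := div_pos hρ (by linarith)
  have hu1 : ρ / (t + ρ) ≤ 1 := by
    rw [div_le_one (by linarith)]; linarith
  have h1 : (t / (t + d)) ^ δ₂ ≤ (t / (t + d)) ^ ε :=
    Real.rpow_le_rpow_of_exponent_ge hs0 hs1 (min_le_left _ _)
  have h2 : (ρ / (t + ρ)) ^ δ₃ ≤ (ρ / (t + ρ)) ^ ε :=
    Real.rpow_le_rpow_of_exponent_ge hu0 hu1 (min_le_right _ _)
  calc (t / (t + d)) ^ δ₂ * (ρ / (t + ρ)) ^ δ₃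
      ≤ (t / (t + d)) ^ ε * (ρ / (t + ρ)) ^ ε := by
        exact mul_le_mul h1 h2 (Real.rpow_nonneg hu0.le _) (Real.rpow_nonneg hs0.le _)
    _ = ((t / (t + d)) * (ρ / (t + ρ))) ^ ε := (Real.mul_rpow hs0.le hu0.le).symm
    _ ≤ (ρ / (ρ + d)) ^ ε := by
        apply Real.rpow_le_rpow (by positivity) _ hε0.le
        rw [div_mul_div_comm, div_le_div_iff₀ (by positivity) (by positivity)]
        nlinarith [mul_pos (mul_pos hρ ht) ht, mul_pos (mul_pos hd hρ) hρ]

set_option maxHeartbeats 2000000 in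
lemma key_bound {X : Type*} [MetricSpace X] [MeasurableSpace X] [BorelSpace X]
    (μ : Measure X)
    (hballs : ∀ (x : X) (r : ℝ), 0 < r → 0 < μ (ball x r) ∧ μ (ball x r) < ∞)
    (Cd : ℝ) (hCd : 0 < Cd)
    (hdb : ∀ (x : X) (r : ℝ), 0 < r →
      (μ (ball x (2 * r))).toReal ≤ Cd * (μ (ball x r)).toReal)
    (ρ : X → ℝ) (C₃ k₀ : ℝ) (hρ : ∀ x, 0 < ρ x) (hC₃ : 0 < C₃) (hk₀ : 0 < k₀)
    (hadm : ∀ x y : X,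
      ρ y ≤ C₃ * ρ x ^ (1 / (1 + k₀)) * (ρ x + dist x y) ^ (k₀ / (1 + k₀)))
    (Tt : ℝ → X → X → ℝ) (CT δ₂ δ₃ : ℝ) (hCT : 0 < CT) (hδ₂ : 0 < δ₂) (hδ₃ : 0 < δ₃)
    (hsize : ∀ (t : ℝ) (x y : X), 0 < t →
      |Tt t x y| ≤ CT * ((μ (ball x t)).toReal + (μ (ball x (dist x y))).toReal)⁻¹ *
        (t / (t + dist x y)) ^ δ₂ * (ρ x / (t + ρ x)) ^ δ₃)
    (a : X → ℝ) (y₀ : X) (r : ℝ) (hrρ : r < ρ y₀)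
    (hInt : Integrable a μ) (hL1 : ∫ y, |a y| ∂μ ≤ 1)
    (ha0 : ∀ x, x ∉ ball y₀ r → a x = 0)
    (R : ℝ) (hR4 : 4 * ρ y₀ ≤ R) (x : X) (hxR : R ≤ dist x y₀)
    (t : ℝ) (ht : ρ x ≤ t) :
    |∫ y, Tt t x y * a y ∂μ| ≤
      CT * Cd ^ 2 * ((8/3) * C₃) ^ (min δ₂ δ₃) * ((μ (ball y₀ R)).toReal)⁻¹ *
        (ρ y₀ / R) ^ ((1 / (1 + k₀)) * min δ₂ δ₃) := by
  set ε := min δ₂ δ₃ with hεdef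
  set α := 1 / (1 + k₀) with hαdef
  clear_value ε α
  have hε0 : 0 < ε := by rw [hεdef]; exact lt_min hδ₂ hδ₃
  have hα0 : 0 < α := by rw [hαdef]; positivity
  have hα1 : α ≤ 1 := by
    rw [hαdef, div_le_one (by linarith)]; linarith
  have hρ₀ : 0 < ρ y₀ := hρ y₀
  have hR0 : 0 < R := by linarith
  set D := dist x y₀ with hDdef
  clear_value D
  have hD0 : 0 < D := lt_of_lt_of_le hR0 hxR
  have ht0 : 0 < t := lt_of_lt_of_le (hρ x) ht
  have hAR : 0 < (μ (ball y₀ R)).toReal :=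
    ENNReal.toReal_pos (hballs y₀ R hR0).1.ne' (hballs y₀ R hR0).2.ne
  set M := CT * Cd ^ 2 * ((8/3) * C₃) ^ ε * ((μ (ball y₀ R)).toReal)⁻¹ *
      (ρ y₀ / R) ^ (α * ε) with hMdef
  clear_value M
  have hM0 : 0 ≤ M := by rw [hMdef]; positivity
  -- pointwise kernel bound on the ball
  have hker : ∀ y ∈ ball y₀ r, |Tt t x y| ≤ M := by
    intro y hy
    set d := dist x y with hddef
    clear_value d
    have hyd : dist y y₀ < r := mem_ball.mp hy
    have hd34 : 3 / 4 * D ≤ d := by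
      have htri : D ≤ d + dist y y₀ := by rw [hDdef, hddef]; exact dist_triangle x y y₀
      have : ρ y₀ ≤ D / 4 := by linarith
      linarith
    have hd0 : 0 < d := by linarith
    -- measure comparison
    have hsub : ball y₀ R ⊆ ball x (2 * D) := by
      intro z hz
      have : dist z y₀ < R := mem_ball.mp hz
      have : dist z x ≤ dist z y₀ + dist y₀ x := dist_triangle z y₀ x
      rw [mem_ball]
      rw [dist_comm y₀ x, ← hDdef] at this
      linarith
    have hfin : ∀ (c : X) (s : ℝ), 0 < s → μ (ball c s) ≠ ∞ :=
      fun c s hs => (hballs c s hs).2.ne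
    have m1 : (μ (ball y₀ R)).toReal ≤ (μ (ball x (2 * D))).toReal :=
      ENNReal.toReal_mono (hfin x (2 * D) (by linarith)) (measure_mono hsub)
    have m2 : (μ (ball x (2 * D))).toReal ≤ Cd * (μ (ball x D)).toReal := hdb x D hD0
    have m3 : (μ (ball x D)).toReal ≤ (μ (ball x (2 * (3 / 4 * D)))).toReal :=
      ENNReal.toReal_mono (hfin x _ (by linarith))
        (measure_mono (ball_subset_ball (by linarith)))
    have m4 : (μ (ball x (2 * (3 / 4 * D)))).toReal ≤ Cd * (μ (ball x (3 / 4 * D))).toReal :=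
      hdb x (3 / 4 * D) (by linarith)
    have m5 : (μ (ball x (3 / 4 * D))).toReal ≤ (μ (ball x d)).toReal :=
      ENNReal.toReal_mono (hfin x d hd0) (measure_mono (ball_subset_ball hd34))
    have hchain : (μ (ball y₀ R)).toReal ≤ Cd ^ 2 * (μ (ball x d)).toReal := by
      nlinarith [ENNReal.toReal_nonneg (a := μ (ball x D)),
        ENNReal.toReal_nonneg (a := μ (ball x (3 / 4 * D)))]
    have hbx : 0 < (μ (ball x d)).toReal :=
      ENNReal.toReal_pos (hballs x d hd0).1.ne' (hballs x d hd0).2.ne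
    have hbt : 0 ≤ (μ (ball x t)).toReal := ENNReal.toReal_nonneg
    -- inverse bound
    have hinv : ((μ (ball x t)).toReal + (μ (ball x d)).toReal)⁻¹ ≤
        Cd ^ 2 * ((μ (ball y₀ R)).toReal)⁻¹ := by
      have hsum : 0 < (μ (ball x t)).toReal + (μ (ball x d)).toReal := by linarith
      have h1 : (1 : ℝ) / ((μ (ball x t)).toReal + (μ (ball x d)).toReal) ≤
          Cd ^ 2 / (μ (ball y₀ R)).toReal := by
        rw [div_le_div_iff₀ hsum hAR]
        nlinarith
      simpa [one_div, div_eq_mul_inv] using h1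
    -- decay bound
    have dec1 : (t / (t + d)) ^ δ₂ * (ρ x / (t + ρ x)) ^ δ₃ ≤ (ρ x / (ρ x + d)) ^ ε := by
      rw [hεdef]
      exact decay_aux hδ₂ hδ₃ ht0 (hρ x) hd0
    have dec2 : (ρ x / (ρ x + d)) ^ ε ≤ (ρ x / d) ^ ε := by
      exact Real.rpow_le_rpow (div_nonneg (hρ x).le (by linarith [hρ x]))
        (div_le_div_of_nonneg_left (hρ x).le hd0 (by linarith [hρ x])) hε0.le
    have hadm' : ρ x ≤ C₃ * ρ y₀ ^ α * (ρ y₀ + D) ^ (k₀ / (1 + k₀)) := by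
      have := hadm y₀ x
      rwa [dist_comm y₀ x, ← hDdef] at this
    have hk1mα : k₀ / (1 + k₀) = 1 - α := by
      rw [hαdef]; field_simp; ring
    have hρ₀D : ρ y₀ ≤ D := by linarith
    have dec3 : ρ x ≤ 2 * C₃ * ρ y₀ ^ α * D ^ (1 - α) := by
      rw [hk1mα] at hadm'
      have e1 : (ρ y₀ + D) ^ (1 - α) ≤ (2 * D) ^ (1 - α) :=
        Real.rpow_le_rpow (by linarith) (by linarith) (by linarith)
      have e2 : (2 * D) ^ (1 - α) = 2 ^ (1 - α) * D ^ (1 - α) :=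
        Real.mul_rpow (by norm_num) hD0.le
      have e3 : (2 : ℝ) ^ (1 - α) ≤ 2 := by
        calc (2 : ℝ) ^ (1 - α) ≤ 2 ^ (1 : ℝ) :=
              Real.rpow_le_rpow_of_exponent_le one_le_two (by linarith)
          _ = 2 := Real.rpow_one 2
      have e4 : (ρ y₀ + D) ^ (1 - α) ≤ 2 * D ^ (1 - α) := by
        calc (ρ y₀ + D) ^ (1 - α) ≤ 2 ^ (1 - α) * D ^ (1 - α) := e1.trans_eq e2
          _ ≤ 2 * D ^ (1 - α) := by
              have : (0:ℝ) ≤ D ^ (1 - α) := Real.rpow_nonneg hD0.le _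
              nlinarith
      calc ρ x ≤ C₃ * ρ y₀ ^ α * (ρ y₀ + D) ^ (1 - α) := hadm'
        _ ≤ C₃ * ρ y₀ ^ α * (2 * D ^ (1 - α)) := by
            have : (0:ℝ) < C₃ * ρ y₀ ^ α := by positivity
            nlinarith
        _ = 2 * C₃ * ρ y₀ ^ α * D ^ (1 - α) := by ring
    have dec4 : ρ x / d ≤ (8/3) * C₃ * (ρ y₀ / R) ^ α := by
      have s1 : ρ x / d ≤ ρ x / (3 / 4 * D) :=
        div_le_div_of_nonneg_left (hρ x).le (by linarith) hd34
      have s2 : ρ x / (3 / 4 * D) ≤ (2 * C₃ * ρ y₀ ^ α * D ^ (1 - α)) / (3 / 4 * D) :=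
        div_le_div_of_nonneg_right dec3 (by linarith)
      have s3 : (2 * C₃ * ρ y₀ ^ α * D ^ (1 - α)) / (3 / 4 * D) =
          (8/3) * C₃ * (ρ y₀ / D) ^ α := by
        rw [Real.div_rpow hρ₀.le hD0.le, Real.rpow_sub hD0, Real.rpow_one]
        have hDα : (0:ℝ) < D ^ α := Real.rpow_pos_of_pos hD0 α
        field_simp
        ring
      have s4 : (ρ y₀ / D) ^ α ≤ (ρ y₀ / R) ^ α :=
        Real.rpow_le_rpow (div_nonneg hρ₀.le hD0.le)
          (div_le_div_of_nonneg_left hρ₀.le hR0 hxR) hα0.le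
      calc ρ x / d ≤ (2 * C₃ * ρ y₀ ^ α * D ^ (1 - α)) / (3 / 4 * D) := s1.trans s2
        _ = (8/3) * C₃ * (ρ y₀ / D) ^ α := s3
        _ ≤ (8/3) * C₃ * (ρ y₀ / R) ^ α := by
            have : (0:ℝ) < (8/3) * C₃ := by positivity
            nlinarith
    have dec5 : (ρ x / d) ^ ε ≤ ((8/3) * C₃) ^ ε * (ρ y₀ / R) ^ (α * ε) := by
      calc (ρ x / d) ^ ε ≤ ((8/3) * C₃ * (ρ y₀ / R) ^ α) ^ ε :=
            Real.rpow_le_rpow (div_nonneg (hρ x).le hd0.le) dec4 hε0.le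
        _ = ((8/3) * C₃) ^ ε * ((ρ y₀ / R) ^ α) ^ ε :=
            Real.mul_rpow (by positivity)
              (Real.rpow_nonneg (div_nonneg hρ₀.le hR0.le) _)
        _ = ((8/3) * C₃) ^ ε * (ρ y₀ / R) ^ (α * ε) := by
            rw [← Real.rpow_mul (div_nonneg hρ₀.le hR0.le)]
    have hdec : (t / (t + d)) ^ δ₂ * (ρ x / (t + ρ x)) ^ δ₃ ≤
        ((8/3) * C₃) ^ ε * (ρ y₀ / R) ^ (α * ε) :=
      dec1.trans (dec2.trans dec5)
    -- combine
    calc |Tt t x y| ≤ CT * ((μ (ball x t)).toReal + (μ (ball x d)).toReal)⁻¹ *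
          (t / (t + d)) ^ δ₂ * (ρ x / (t + ρ x)) ^ δ₃ := by
            rw [hddef]; exact hsize t x y ht0
      _ = CT * (((μ (ball x t)).toReal + (μ (ball x d)).toReal)⁻¹ *
          ((t / (t + d)) ^ δ₂ * (ρ x / (t + ρ x)) ^ δ₃)) := by ring
      _ ≤ CT * ((Cd ^ 2 * ((μ (ball y₀ R)).toReal)⁻¹) *
          (((8/3) * C₃) ^ ε * (ρ y₀ / R) ^ (α * ε))) := by
          apply mul_le_mul_of_nonneg_left _ hCT.le
          apply mul_le_mul hinv hdec
            (mul_nonneg (Real.rpow_nonneg (div_nonneg ht0.le (by linarith)) _)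
              (Real.rpow_nonneg (div_nonneg (hρ x).le (by linarith [hρ x])) _))
          positivity
      _ = M := by rw [hMdef]; ring
  -- integral bound
  have habs : |∫ y, Tt t x y * a y ∂μ| ≤ ∫ y, |Tt t x y * a y| ∂μ := by
    simpa only [Real.norm_eq_abs] using
      norm_integral_le_integral_norm (f := fun y => Tt t x y * a y) (μ := μ)
  have hmono : ∫ y, |Tt t x y * a y| ∂μ ≤ ∫ y, M * |a y| ∂μ := by
    apply integral_mono_of_nonneg (ae_of_all _ fun y => abs_nonneg _)
      ((hInt.abs).const_mul M)
    apply ae_of_all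
    intro y
    show |Tt t x y * a y| ≤ M * |a y|
    by_cases hy : y ∈ ball y₀ r
    · rw [abs_mul]
      exact mul_le_mul_of_nonneg_right (hker y hy) (abs_nonneg _)
    · simp [ha0 y hy]
  have hfin : ∫ y, M * |a y| ∂μ ≤ M := by
    rw [integral_const_mul]
    calc M * ∫ y, |a y| ∂μ ≤ M * 1 := mul_le_mul_of_nonneg_left hL1 hM0
      _ = M := mul_one M
  exact (habs.trans hmono).trans hfin

lemma atom_L1 {X : Type*} [MetricSpace X] [MeasurableSpace X] [BorelSpace X]
    (μ : Measure X) (a : X → ℝ) (y₀ : X) (r : ℝ)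
    (hpos : 0 < μ (ball y₀ r)) (hfin : μ (ball y₀ r) < ∞)
    (hmem : MemLp a 2 μ) (ha0 : ∀ x, x ∉ ball y₀ r → a x = 0)
    (hnorm : eLpNorm a 2 μ ≤ μ (ball y₀ r) ^ (-(1 : ℝ) / 2)) :
    Integrable a μ ∧ ∫ y, |a y| ∂μ ≤ 1 := by
  set B := ball y₀ r with hB
  have hBm : MeasurableSet B := measurableSet_ball
  have hind : a = B.indicator a := by
    funext x
    by_cases hx : x ∈ B
    · simp [Set.indicator_of_mem hx]
    · simp [Set.indicator_of_notMem hx, ha0 x hx]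
  have hFin : IsFiniteMeasure (μ.restrict B) :=
    ⟨by simpa [Measure.restrict_apply_univ] using hfin⟩
  have hmemR : MemLp a 2 (μ.restrict B) := hmem.restrict B
  have hIntR : Integrable a (μ.restrict B) := hmemR.integrable one_le_two
  have hInt : Integrable a μ := by
    rw [hind]
    exact (integrable_indicator_iff hBm).mpr hIntR
  refine ⟨hInt, ?_⟩
  -- L¹ norm bound
  have h1 : eLpNorm a 1 μ = eLpNorm a 1 (μ.restrict B) := by
    conv_lhs => rw [hind]
    exact eLpNorm_indicator_eq_eLpNorm_restrict hBm
  have h2 : eLpNorm a 1 (μ.restrict B) ≤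
      eLpNorm a 2 (μ.restrict B) * (μ.restrict B Set.univ) ^ ((1:ℝ)/1 - 1/2) := by
    exact eLpNorm_le_eLpNorm_mul_rpow_measure_univ (by norm_num) hmemR.aestronglyMeasurable
  have h3 : eLpNorm a 2 (μ.restrict B) ≤ eLpNorm a 2 μ :=
    eLpNorm_mono_measure a Measure.restrict_le_self
  have hμuniv : μ.restrict B Set.univ = μ B := by
    simp [Measure.restrict_apply_univ]
  have h4 : eLpNorm a 1 μ ≤ μ B ^ (-(1:ℝ)/2) * μ B ^ ((1:ℝ)/1 - 1/2) := by
    rw [h1]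
    calc eLpNorm a 1 (μ.restrict B) ≤ eLpNorm a 2 (μ.restrict B) * (μ B) ^ ((1:ℝ)/1 - 1/2) := by
          rw [← hμuniv]; exact h2
      _ ≤ μ B ^ (-(1:ℝ)/2) * μ B ^ ((1:ℝ)/1 - 1/2) := by
          gcongr
          exact h3.trans hnorm
  have h5 : μ B ^ (-(1:ℝ)/2) * μ B ^ ((1:ℝ)/1 - 1/2) = 1 := by
    rw [← ENNReal.rpow_add _ _ hpos.ne' hfin.ne]
    norm_num
  have h6 : eLpNorm a 1 μ ≤ 1 := h4.trans_eq h5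
  have h7 : ∫ y, |a y| ∂μ = (eLpNorm a 1 μ).toReal := by
    rw [eLpNorm_one_eq_lintegral_enorm]
    rw [← integral_norm_eq_lintegral_enorm hmem.aestronglyMeasurable]
    simp [Real.norm_eq_abs]
  rw [h7]
  calc (eLpNorm a 1 μ).toReal ≤ (1 : ℝ≥0∞).toReal := ENNReal.toReal_mono one_ne_top h6
    _ = 1 := by simp

set_option maxHeartbeats 2000000 in
/-- The tail estimate in the proof of Theorem 4.2: for kernels with ρ-localized decay,
the maximal function over large times t ≥ ρ(x) applied to a (1,2)_ρ-atom has uniformly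
bounded L¹-norm outside B(y₀, 4ρ(y₀)). -/
theorem maximal_large_time_atom_bound {X : Type*} [MetricSpace X]
    [MeasurableSpace X] [BorelSpace X] (μ : Measure X)
    (hballs : ∀ (x : X) (r : ℝ), 0 < r → 0 < μ (ball x r) ∧ μ (ball x r) < ∞)
    (hdouble : ∃ C > 0, ∀ (x : X) (r : ℝ), 0 < r →
      (μ (ball x (2 * r))).toReal ≤ C * (μ (ball x r)).toReal)
    (hinf : μ Set.univ = ∞)
    (ρ : X → ℝ) (C₃ k₀ : ℝ) (hρ : ∀ x, 0 < ρ x) (hC₃ : 0 < C₃) (hk₀ : 0 < k₀)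
    (hadm : ∀ x y : X,
      ρ y ≤ C₃ * ρ x ^ (1 / (1 + k₀)) * (ρ x + dist x y) ^ (k₀ / (1 + k₀)))
    (Tt : ℝ → X → X → ℝ) (CT δ₂ δ₃ : ℝ) (hCT : 0 < CT) (hδ₂ : 0 < δ₂) (hδ₃ : 0 < δ₃)
    (hsize : ∀ (t : ℝ) (x y : X), 0 < t →
      |Tt t x y| ≤ CT * ((μ (ball x t)).toReal + (μ (ball x (dist x y))).toReal)⁻¹ *
        (t / (t + dist x y)) ^ δ₂ * (ρ x / (t + ρ x)) ^ δ₃) :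
    ∃ C' > 0, ∀ (a : X → ℝ) (y₀ : X) (r : ℝ), 0 < r → r < ρ y₀ →
      MemLp a 2 μ →
      (∀ x, x ∉ ball y₀ r → a x = 0) →
      eLpNorm a 2 μ ≤ μ (ball y₀ r) ^ (-(1 : ℝ) / 2) →
      (r < ρ y₀ / 4 → ∫ x, a x ∂μ = 0) →
      ∫⁻ x in (ball y₀ (4 * ρ y₀))ᶜ,
        ⨆ (t : ℝ) (_ : ρ x ≤ t), ENNReal.ofReal |∫ y, Tt t x y * a y ∂μ| ∂μ ≤
        ENNReal.ofReal C' := by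
  obtain ⟨Cd, hCd, hdb⟩ := hdouble
  have hε0 : 0 < min δ₂ δ₃ := lt_min hδ₂ hδ₃
  have hα0 : 0 < 1 / (1 + k₀) := by positivity
  set β := 1 / (1 + k₀) * min δ₂ δ₃ with hβdef
  have hβ0 : 0 < β := by positivity
  set q : ℝ := (1/2 : ℝ) ^ β with hqdef
  have hq0 : 0 < q := Real.rpow_pos_of_pos (by norm_num) _
  have hq1 : q < 1 := Real.rpow_lt_one (by norm_num) (by norm_num) hβ0
  set K' : ℝ := CT * Cd ^ 3 * ((8/3) * C₃) ^ min δ₂ δ₃ * (1/4 : ℝ) ^ β with hK'def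
  have hK'0 : 0 < K' := by
    rw [hK'def]
    have h1 : (0:ℝ) < ((8/3) * C₃) ^ min δ₂ δ₃ := Real.rpow_pos_of_pos (by positivity) _
    have h2 : (0:ℝ) < (1/4 : ℝ) ^ β := Real.rpow_pos_of_pos (by norm_num) _
    positivity
  refine ⟨K' * (1 - q)⁻¹, mul_pos hK'0 (inv_pos.mpr (by linarith)), ?_⟩
  intro a y₀ r hr hrρ hmem ha0 hnorm _
  obtain ⟨hInt, hL1⟩ := atom_L1 μ a y₀ r (hballs y₀ r hr).1 (hballs y₀ r hr).2 hmem ha0 hnorm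
  have hρ₀ : 0 < ρ y₀ := hρ y₀
  set R : ℕ → ℝ := fun j => 4 * ρ y₀ * 2 ^ j with hRdef
  have hRpos : ∀ j, 0 < R j := fun j =>
    show (0:ℝ) < 4 * ρ y₀ * 2 ^ j by positivity
  have hR4 : ∀ j, 4 * ρ y₀ ≤ R j := by
    intro j
    show 4 * ρ y₀ ≤ 4 * ρ y₀ * 2 ^ j
    have h1 : (1:ℝ) ≤ 2 ^ j := one_le_pow₀ one_le_two
    nlinarith
  have hRsucc : ∀ j, R (j + 1) = 2 * R j := by
    intro j
    show 4 * ρ y₀ * 2 ^ (j+1) = 2 * (4 * ρ y₀ * 2 ^ j)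
    ring
  set A : ℕ → Set X := fun j => ball y₀ (R (j+1)) \ ball y₀ (R j) with hAdef
  set F : X → ℝ≥0∞ := fun x =>
    ⨆ (t : ℝ) (_ : ρ x ≤ t), ENNReal.ofReal |∫ y, Tt t x y * a y ∂μ| with hFdef
  have hcover : (ball y₀ (4 * ρ y₀))ᶜ ⊆ ⋃ j, A j := by
    intro x hx
    have hx4 : 4 * ρ y₀ ≤ dist x y₀ := by
      by_contra h
      exact hx (mem_ball.mpr (by push_neg at h; exact lt_of_lt_of_le h le_rfl))
    have hex : ∃ n : ℕ, dist x y₀ < R n := by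
      obtain ⟨n, hn⟩ := pow_unbounded_of_one_lt (dist x y₀ / (4 * ρ y₀)) (one_lt_two)
      refine ⟨n, ?_⟩
      rw [div_lt_iff₀ (by positivity)] at hn
      show dist x y₀ < 4 * ρ y₀ * 2 ^ n
      nlinarith
    classical
    let m := Nat.find hex
    have hm : dist x y₀ < R m := Nat.find_spec hex
    have hm0 : m ≠ 0 := by
      intro h
      have h0 : dist x y₀ < R 0 := by rw [← h]; exact hm
      have h0' : dist x y₀ < 4 * ρ y₀ := by
        have : R 0 = 4 * ρ y₀ := by show 4 * ρ y₀ * 2 ^ (0:ℕ) = 4 * ρ y₀; norm_num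
        linarith [this ▸ h0]
      linarith
    refine Set.mem_iUnion.mpr ⟨m - 1, ?_⟩
    have hsucc : m - 1 + 1 = m := Nat.succ_pred_eq_of_pos (Nat.pos_of_ne_zero hm0)
    constructor
    · rw [mem_ball, hsucc]; exact hm
    · intro hmem'
      exact Nat.find_min hex (Nat.pred_lt hm0) (mem_ball.mp hmem')
  have hAle : ∀ j, ∫⁻ x in A j, F x ∂μ ≤ ENNReal.ofReal (K' * q ^ j) := by
    intro j
    set Mj : ℝ := CT * Cd ^ 2 * ((8/3) * C₃) ^ min δ₂ δ₃ *
      ((μ (ball y₀ (R j))).toReal)⁻¹ * (ρ y₀ / R j) ^ β with hMjdef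
    have hARj : 0 < (μ (ball y₀ (R j))).toReal :=
      ENNReal.toReal_pos (hballs y₀ (R j) (hRpos j)).1.ne' (hballs y₀ (R j) (hRpos j)).2.ne
    have hMj0 : 0 ≤ Mj := by
      rw [hMjdef]
      have : (0:ℝ) ≤ (ρ y₀ / R j) ^ β :=
        Real.rpow_nonneg (div_nonneg hρ₀.le (hRpos j).le) _
      positivity
    have hFb : ∀ x ∈ A j, F x ≤ ENNReal.ofReal Mj := by
      intro x hx
      have hxR : R j ≤ dist x y₀ := by
        have := hx.2
        rw [mem_ball] at this
        push_neg at this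
        exact this
      rw [hFdef]
      refine iSup₂_le fun t ht => ?_
      apply ENNReal.ofReal_le_ofReal
      rw [hMjdef]
      exact key_bound μ hballs Cd hCd hdb ρ C₃ k₀ hρ hC₃ hk₀ hadm Tt CT δ₂ δ₃
        hCT hδ₂ hδ₃ hsize a y₀ r hrρ hInt hL1 ha0 (R j) (hR4 j) x hxR t ht
    have hAm : MeasurableSet (A j) := measurableSet_ball.diff measurableSet_ball
    calc ∫⁻ x in A j, F x ∂μ ≤ ∫⁻ _ in A j, ENNReal.ofReal Mj ∂μ :=
          setLIntegral_mono measurable_const hFb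
      _ = ENNReal.ofReal Mj * μ (A j) := by rw [setLIntegral_const]
      _ ≤ ENNReal.ofReal Mj * μ (ball y₀ (R (j+1))) := by
          gcongr
          exact Set.diff_subset
      _ = ENNReal.ofReal (Mj * (μ (ball y₀ (R (j+1)))).toReal) := by
          rw [ENNReal.ofReal_mul hMj0,
            ENNReal.ofReal_toReal (hballs y₀ (R (j+1)) (hRpos (j+1))).2.ne]
      _ ≤ ENNReal.ofReal (K' * q ^ j) := by
          apply ENNReal.ofReal_le_ofReal
          have hdb' : (μ (ball y₀ (R (j+1)))).toReal ≤ Cd * (μ (ball y₀ (R j))).toReal := by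
            rw [hRsucc j]
            exact hdb y₀ (R j) (hRpos j)
          have hrq : ρ y₀ / R j = (1/4 : ℝ) * (1/2 : ℝ) ^ j := by
            rw [hRdef]
            rw [div_eq_iff (by positivity : (4 * ρ y₀ * 2 ^ j : ℝ) ≠ 0)]
            rw [one_div, one_div, inv_pow]
            field_simp
          have hrqpow : (ρ y₀ / R j) ^ β = (1/4 : ℝ) ^ β * q ^ j := by
            rw [hrq, Real.mul_rpow (by norm_num) (by positivity)]
            congr 1
            rw [← Real.rpow_natCast ((1/2 : ℝ)) j, ← Real.rpow_mul (by norm_num),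
              mul_comm (j:ℝ) β, Real.rpow_mul (by norm_num), Real.rpow_natCast, hqdef]
          calc Mj * (μ (ball y₀ (R (j+1)))).toReal
              ≤ Mj * (Cd * (μ (ball y₀ (R j))).toReal) :=
                mul_le_mul_of_nonneg_left hdb' hMj0
            _ = (CT * Cd ^ 3 * ((8/3) * C₃) ^ min δ₂ δ₃ * (1/4 : ℝ) ^ β * q ^ j) *
                (((μ (ball y₀ (R j))).toReal)⁻¹ * (μ (ball y₀ (R j))).toReal) := by
                rw [hMjdef, hrqpow]; ring
            _ = K' * q ^ j := by
                rw [inv_mul_cancel₀ hARj.ne', mul_one, hK'def]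
  calc ∫⁻ x in (ball y₀ (4 * ρ y₀))ᶜ, F x ∂μ
      ≤ ∫⁻ x in ⋃ j, A j, F x ∂μ := lintegral_mono_set hcover
    _ ≤ ∑' j, ∫⁻ x in A j, F x ∂μ := lintegral_iUnion_le _ _
    _ ≤ ∑' j, ENNReal.ofReal (K' * q ^ j) := ENNReal.tsum_le_tsum hAle
    _ = ENNReal.ofReal K' * ∑' j, (ENNReal.ofReal q) ^ j := by
        rw [← ENNReal.tsum_mul_left]
        congr 1
        funext j
        rw [ENNReal.ofReal_mul hK'0.le, ENNReal.ofReal_pow hq0.le]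
    _ = ENNReal.ofReal K' * (1 - ENNReal.ofReal q)⁻¹ := by
        rw [ENNReal.tsum_geometric]
    _ = ENNReal.ofReal (K' * (1 - q)⁻¹) := by
        rw [← ENNReal.ofReal_one, ← ENNReal.ofReal_sub _ hq0.le,
          ← ENNReal.ofReal_inv_of_pos (by linarith), ← ENNReal.ofReal_mul hK'0.le]
end

section
/- Let (X,d,μ) be a doubling metric measure space and ρ admissible. Suppose E_t(x,y) ≥ 0 satisfies |E_t(x,y)| ≤ C [μ(B(x,t))+μ(B(x,d(x,y)))]⁻¹ (t/(t+d(x,y)))^{δ₂} (t/(t+ρ(x)))^{δ₁} for some δ₁, δ₂ > 0, and define E_ρ⁺(f)(x) = sup_{0<t<ρ(x)} |∫ E_t(x,y) f(y) dμ(y)|. Then E_ρ⁺ is bounded on L¹(X): there exists C' with ‖E_ρ⁺(f)‖_{L¹(X)} ≤ C' ‖f‖_{L¹(X)} for all f ∈ L¹(X). -/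
open Metric MeasureTheory ENNReal

set_option maxHeartbeats 4000000

private lemma aux_le_mul_min {A p q r z : ℝ} (h1 : z ≤ A * p) (h2 : z ≤ A * q) (h3 : z ≤ A * r) :
    z ≤ A * min p (min q r) := by
  rcases le_total p (min q r) with h | h
  · rw [min_eq_left h]; exact h1
  · rw [min_eq_right h]
    rcases le_total q r with h' | h'
    · rw [min_eq_left h']; exact h2
    · rw [min_eq_right h']; exact h3

private lemma aux_pow_rpow (c : ℝ) (n : ℕ) :
    (((2:ℝ)^n)⁻¹) ^ c = ((2:ℝ)^(-c))^n := by
  rw [← Real.rpow_natCast (2:ℝ) n, ← Real.rpow_neg (by norm_num : (0:ℝ) ≤ 2),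
    ← Real.rpow_natCast ((2:ℝ)^(-c)) n, ← Real.rpow_mul (by norm_num : (0:ℝ) ≤ 2),
    ← Real.rpow_mul (by norm_num : (0:ℝ) ≤ 2)]
  congr 1
  ring

/-- Lemma 4.4: the localized maximal operator E_ρ⁺ associated with kernels E_t
satisfying a ρ-localized size estimate is bounded on L¹(X). -/
theorem Erho_maximal_L1_bounded {X : Type*} [MetricSpace X]
    [MeasurableSpace X] [BorelSpace X] (μ : Measure X) (C₂ κ : ℝ) (hκ : 0 < κ) (hC₂ : 1 ≤ C₂)
    (hballs : ∀ (x : X) (r : ℝ), 0 < r → 0 < μ (ball x r) ∧ μ (ball x r) < ∞)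
    (hrev : ∀ (x : X) (r lam : ℝ), 0 < r → 1 ≤ lam →
      C₂⁻¹ * lam ^ κ * (μ (ball x r)).toReal ≤ (μ (ball x (lam * r))).toReal)
    (hdouble : ∃ C > 0, ∀ (x : X) (r : ℝ), 0 < r →
      (μ (ball x (2 * r))).toReal ≤ C * (μ (ball x r)).toReal)
    (hinf : μ Set.univ = ∞)
    (ρ : X → ℝ) (C₃ k₀ : ℝ) (hρ : ∀ x, 0 < ρ x) (hC₃ : 0 < C₃) (hk₀ : 0 < k₀)
    (hadm : ∀ x y : X,
      ρ y ≤ C₃ * ρ x ^ (1 / (1 + k₀)) * (ρ x + dist x y) ^ (k₀ / (1 + k₀)))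
    (Et : ℝ → X → X → ℝ) (CE δ₁ δ₂ : ℝ) (hCE : 0 < CE) (hδ₁ : 0 < δ₁) (hδ₂ : 0 < δ₂)
    (hEnonneg : ∀ (t : ℝ) (x y : X), 0 < t → 0 ≤ Et t x y)
    (hsize : ∀ (t : ℝ) (x y : X), 0 < t →
      |Et t x y| ≤ CE * ((μ (ball x t)).toReal + (μ (ball x (dist x y))).toReal)⁻¹ *
        (t / (t + dist x y)) ^ δ₂ * (t / (t + ρ x)) ^ δ₁) :
    ∃ C' > 0, ∀ f : X → ℝ, Integrable f μ →
      ∫⁻ x, ⨆ (t : ℝ) (_ : 0 < t ∧ t < ρ x),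
          ENNReal.ofReal |∫ y, Et t x y * f y ∂μ| ∂μ ≤
        ENNReal.ofReal (C' * ∫ x, |f x| ∂μ) := by
  classical
  -- X is nonempty
  rcases isEmpty_or_nonempty X with hX | hX
  · refine absurd hinf ?_
    have : μ Set.univ = 0 := by
      rw [Set.univ_eq_empty_iff.2 hX, measure_empty]
    simp [this]
  obtain ⟨x₀⟩ := hX
  haveI : Nonempty X := ⟨x₀⟩
  obtain ⟨C_D, hCD0, hCD⟩ := hdouble
  -- basic facts on measures of balls
  have hbpos : ∀ (z : X) (r : ℝ), 0 < r → 0 < (μ (ball z r)).toReal := by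
    intro z r hr
    exact ENNReal.toReal_pos (hballs z r hr).1.ne' (hballs z r hr).2.ne
  have hbfin : ∀ (z : X) (r : ℝ), μ (ball z r) ≠ ∞ := by
    intro z r
    rcases le_or_gt r 0 with h | h
    · rw [ball_eq_empty.2 h, measure_empty]; exact ENNReal.zero_ne_top
    · exact (hballs z r h).2.ne
  have hbmono : ∀ (z : X) (r₁ r₂ : ℝ), r₁ ≤ r₂ →
      (μ (ball z r₁)).toReal ≤ (μ (ball z r₂)).toReal := by
    intro z r₁ r₂ h
    exact ENNReal.toReal_mono (hbfin z r₂) (measure_mono (ball_subset_ball h))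
  have hCD1 : 1 ≤ C_D := by
    have h1 := hCD x₀ 1 one_pos
    have h2 : (μ (ball x₀ 1)).toReal ≤ (μ (ball x₀ (2*1))).toReal :=
      hbmono x₀ 1 (2*1) (by norm_num)
    have h3 := hbpos x₀ 1 one_pos
    have h4 : 1 * (μ (ball x₀ 1)).toReal ≤ C_D * (μ (ball x₀ 1)).toReal := by
      rw [one_mul]; exact h2.trans h1
    exact le_of_mul_le_mul_right h4 h3
  -- doubling iteration
  have hiter : ∀ (k : ℕ) (z : X) (s : ℝ), 0 < s →
      (μ (ball z (2^k * s))).toReal ≤ C_D^k * (μ (ball z s)).toReal := by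
    intro k
    induction k with
    | zero => intro z s hs; simp
    | succ k ih =>
      intro z s hs
      have h1 : (2:ℝ)^(k+1) * s = 2 * (2^k * s) := by ring
      rw [h1]
      calc (μ (ball z (2 * (2^k * s)))).toReal ≤ C_D * (μ (ball z (2^k * s))).toReal :=
            hCD z _ (by positivity)
        _ ≤ C_D * (C_D^k * (μ (ball z s)).toReal) :=
            mul_le_mul_of_nonneg_left (ih z s hs) hCD0.le
        _ = C_D^(k+1) * (μ (ball z s)).toReal := by ring
  -- σ-finiteness
  have hspan : (⋃ n : ℕ, ball x₀ ((n:ℝ)+1)) = Set.univ := by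
    ext x
    simp only [Set.mem_iUnion, Set.mem_univ, iff_true]
    obtain ⟨n, hn⟩ := exists_nat_gt (dist x x₀)
    exact ⟨n, by rw [mem_ball]; linarith⟩
  haveI : SigmaFinite μ := by
    refine ⟨⟨⟨fun n => ball x₀ ((n:ℝ)+1), fun _ => trivial,
      fun n => (hballs x₀ ((n:ℝ)+1) (by positivity)).2, hspan⟩⟩⟩
  -- total boundedness of balls, hence separability and second countability
  have hTB : ∀ (c : X) (r : ℝ), TotallyBounded (ball c r) := by
    intro c r
    rcases le_or_gt r 0 with hr | hr
    · rw [ball_eq_empty.2 hr]; exact totallyBounded_empty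
    rw [Metric.totallyBounded_iff]
    intro ε hε
    by_contra hcon
    push_neg at hcon
    have h : ∀ t : Finset X, ∃ x ∈ ball c r, ∀ y ∈ t, ε ≤ dist x y := by
      intro t
      have := hcon t t.finite_toSet
      rw [Set.not_subset] at this
      obtain ⟨x, hx1, hx2⟩ := this
      refine ⟨x, hx1, fun y hy => ?_⟩
      by_contra hlt
      push_neg at hlt
      exact hx2 (Set.mem_biUnion hy (mem_ball'.2 (by rwa [dist_comm])))
    choose g hg1 hg2 using h
    set T : ℕ → Finset X := fun n => Nat.rec ∅ (fun _ s => insert (g s) s) n with hT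
    set u : ℕ → X := fun n => g (T n) with hu
    have hTsucc : ∀ n, T (n+1) = insert (u n) (T n) := fun n => rfl
    have hmono : ∀ m n, m ≤ n → T m ⊆ T n := by
      intro m n hmn
      induction n with
      | zero => simp_all
      | succ n ih =>
        rcases Nat.lt_or_ge m (n+1) with h' | h'
        · have := ih (Nat.lt_succ_iff.mp h')
          rw [hTsucc]
          exact this.trans (Finset.subset_insert _ _)
        · have : m = n + 1 := le_antisymm hmn h'
          rw [this]
    have hu_mem : ∀ n, u n ∈ ball c r := fun n => hg1 _
    have husep : ∀ m n, m < n → ε ≤ dist (u n) (u m) := by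
      intro m n hmn
      refine hg2 (T n) (u m) ?_
      have h1 : u m ∈ T (m+1) := by rw [hTsucc]; exact Finset.mem_insert_self _ _
      exact hmono (m+1) n hmn h1
    obtain ⟨k, hk⟩ := pow_unbounded_of_one_lt (2*r/(ε/2)) (one_lt_two (α := ℝ))
    have hk' : 2*r ≤ 2^k * (ε/2) := by
      rw [div_lt_iff₀ (by positivity)] at hk
      linarith
    set m₀ := (μ (ball c r)).toReal / C_D^k with hm₀def
    have hm₀ : 0 < m₀ := div_pos (hbpos c r hr) (by positivity)
    have hsmall : ∀ n, m₀ ≤ (μ (ball (u n) (ε/2))).toReal := by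
      intro n
      have hsub : ball c r ⊆ ball (u n) (2^k * (ε/2)) := by
        intro z hz
        rw [mem_ball] at hz ⊢
        have h1 : dist (u n) c < r := mem_ball.1 (hu_mem n)
        have h2 : dist z (u n) ≤ dist z c + dist c (u n) := dist_triangle _ _ _
        rw [dist_comm c (u n)] at h2
        linarith
      have h1 : (μ (ball c r)).toReal ≤ (μ (ball (u n) (2^k*(ε/2)))).toReal :=
        ENNReal.toReal_mono (hbfin _ _) (measure_mono hsub)
      have h2 := hiter k (u n) (ε/2) (half_pos hε)
      rw [hm₀def, div_le_iff₀ (by positivity)]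
      linarith
    obtain ⟨N, hN⟩ := exists_nat_gt ((μ (ball c (r+ε))).toReal / m₀)
    have hdisj : (Finset.range N : Set ℕ).PairwiseDisjoint
        (fun n => ball (u n) (ε/2)) := by
      intro m _ n _ hmn
      refine Set.disjoint_left.2 fun z hzm hzn => ?_
      rw [mem_ball] at hzm hzn
      have : dist (u m) (u n) < ε := by
        calc dist (u m) (u n) ≤ dist (u m) z + dist z (u n) := dist_triangle _ _ _
          _ < ε/2 + ε/2 := by rw [dist_comm (u m) z]; exact add_lt_add hzm hzn
          _ = ε := by ring
      rcases Nat.lt_or_ge m n with h | h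
      · rw [dist_comm] at this
        exact absurd this (not_lt.2 (husep m n h))
      · have h' : n < m := lt_of_le_of_ne h (Ne.symm hmn)
        exact absurd this (not_lt.2 (husep n m h'))
    have hsum : ∑ n ∈ Finset.range N, μ (ball (u n) (ε/2)) ≤ μ (ball c (r+ε)) := by
      rw [← measure_biUnion_finset hdisj (fun n _ => measurableSet_ball)]
      refine measure_mono ?_
      intro z hz
      simp only [Set.mem_iUnion] at hz
      obtain ⟨n, _, hzn⟩ := hz
      rw [mem_ball] at hzn ⊢
      have h1 : dist (u n) c < r := mem_ball.1 (hu_mem n)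
      calc dist z c ≤ dist z (u n) + dist (u n) c := dist_triangle _ _ _
        _ < ε/2 + r := add_lt_add hzn h1
        _ ≤ r + ε := by linarith
    have hterm : ∀ n ∈ Finset.range N, ENNReal.ofReal m₀ ≤ μ (ball (u n) (ε/2)) := by
      intro n _
      calc ENNReal.ofReal m₀ ≤ ENNReal.ofReal ((μ (ball (u n) (ε/2))).toReal) :=
            ENNReal.ofReal_le_ofReal (hsmall n)
        _ = μ (ball (u n) (ε/2)) := ENNReal.ofReal_toReal (hbfin _ _)
    have hcard : (N : ℝ≥0∞) * ENNReal.ofReal m₀ ≤ μ (ball c (r+ε)) := by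
      calc (N : ℝ≥0∞) * ENNReal.ofReal m₀
          = ∑ _n ∈ Finset.range N, ENNReal.ofReal m₀ := by
            rw [Finset.sum_const, Finset.card_range, nsmul_eq_mul]
        _ ≤ ∑ n ∈ Finset.range N, μ (ball (u n) (ε/2)) := Finset.sum_le_sum hterm
        _ ≤ μ (ball c (r+ε)) := hsum
    have hfin : μ (ball c (r+ε)) ≠ ∞ := hbfin _ _
    have := ENNReal.toReal_mono hfin hcard
    rw [ENNReal.toReal_mul, ENNReal.toReal_natCast, ENNReal.toReal_ofReal hm₀.le] at this
    rw [div_lt_iff₀ hm₀] at hN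
    linarith
  haveI hsepX : TopologicalSpace.SeparableSpace X := by
    have h1 : TopologicalSpace.IsSeparable (Set.univ : Set X) := by
      rw [← hspan]
      exact TopologicalSpace.IsSeparable.iUnion fun n => (hTB x₀ _).isSeparable
    exact TopologicalSpace.isSeparable_univ_iff.mp h1
  haveI : SecondCountableTopology X := UniformSpace.secondCountable_of_separable X
  -- singletons are null
  have hsing : ∀ z : X, μ {z} = 0 := by
    intro z
    have hsub1 : ∀ r : ℝ, 0 < r → ({z} : Set X) ⊆ ball z r := by
      intro r hr w hw
      simp only [Set.mem_singleton_iff] at hw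
      rw [hw, mem_ball, dist_self]; exact hr
    have hfin : μ {z} ≠ ∞ :=
      ne_top_of_le_ne_top (hbfin z 1) (measure_mono (hsub1 1 one_pos))
    have hC₂0 : (0:ℝ) < C₂ := lt_of_lt_of_le one_pos hC₂
    have hbd : ∀ n : ℕ, (μ {z}).toReal ≤ C₂ * ((((n:ℝ)+1) ^ κ)⁻¹ * (μ (ball z 1)).toReal) := by
      intro n
      have hn1 : (0:ℝ) < (n:ℝ)+1 := by positivity
      have h1 := hrev z ((n:ℝ)+1)⁻¹ ((n:ℝ)+1) (by positivity) (by
        rw [le_add_iff_nonneg_left]; positivity)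
      rw [mul_inv_cancel₀ hn1.ne'] at h1
      have hκpos : (0:ℝ) < ((n:ℝ)+1) ^ κ := Real.rpow_pos_of_pos hn1 κ
      have h2 : (μ {z}).toReal ≤ (μ (ball z ((n:ℝ)+1)⁻¹)).toReal :=
        ENNReal.toReal_mono (hbfin _ _) (measure_mono (hsub1 _ (by positivity)))
      have h3 := mul_le_mul_of_nonneg_left h1
        (by positivity : (0:ℝ) ≤ C₂ * (((n:ℝ)+1) ^ κ)⁻¹)
      calc (μ {z}).toReal ≤ (μ (ball z ((n:ℝ)+1)⁻¹)).toReal := h2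
        _ = C₂ * (((n:ℝ)+1) ^ κ)⁻¹ * (C₂⁻¹ * ((n:ℝ)+1) ^ κ *
            (μ (ball z ((n:ℝ)+1)⁻¹)).toReal) := by
          field_simp
        _ ≤ C₂ * (((n:ℝ)+1) ^ κ)⁻¹ * (μ (ball z 1)).toReal := h3
        _ = C₂ * ((((n:ℝ)+1) ^ κ)⁻¹ * (μ (ball z 1)).toReal) := by ring
    have h1 : Filter.Tendsto (fun n : ℕ => ((n:ℝ)+1)) Filter.atTop Filter.atTop :=
      Filter.tendsto_atTop_add_const_right _ 1 tendsto_natCast_atTop_atTop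
    have h2 : Filter.Tendsto (fun n : ℕ => ((n:ℝ)+1)^κ) Filter.atTop Filter.atTop :=
      (tendsto_rpow_atTop hκ).comp h1
    have h3 : Filter.Tendsto (fun n : ℕ => ((((n:ℝ)+1)^κ)⁻¹ * (μ (ball z 1)).toReal))
        Filter.atTop (nhds (0 * (μ (ball z 1)).toReal)) :=
      h2.inv_tendsto_atTop.mul_const _
    have h4 : Filter.Tendsto (fun n : ℕ => C₂ * ((((n:ℝ)+1)^κ)⁻¹ * (μ (ball z 1)).toReal))
        Filter.atTop (nhds 0) := by
      have := h3.const_mul C₂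
      simpa using this
    have h5 : (μ {z}).toReal ≤ 0 := ge_of_tendsto' h4 hbd
    have h6 : (μ {z}).toReal = 0 := le_antisymm h5 ENNReal.toReal_nonneg
    rcases (ENNReal.toReal_eq_zero_iff _).mp h6 with h | h
    · exact h
    · exact absurd h hfin
  -- constants
  have hk1 : (0:ℝ) < 1 + k₀ := by linarith
  set a : ℝ := 1/(1+k₀) with ha_def
  set b : ℝ := k₀/(1+k₀) with hb_def
  have ha : 0 < a := by positivity
  have hb : 0 < b := by positivity
  have hab : a + b = 1 := by rw [ha_def, hb_def]; field_simp
  have hb1 : b ≤ 1 := by rw [hb_def, div_le_one hk1]; linarith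
  set ε : ℝ := min κ δ₁ with hε_def
  have hε : 0 < ε := lt_min hκ hδ₁
  have hεκ : ε ≤ κ := min_le_left _ _
  have hεδ : ε ≤ δ₁ := min_le_right _ _
  set δ' : ℝ := δ₂ * a with hδ'_def
  have hδ'0 : 0 < δ' := by positivity
  have h2C₃ : (0:ℝ) < 2*C₃ := by positivity
  set C₆ : ℝ := max (max 1 (2*C₃^2)) ((2*C₃) ^ ((1:ℝ)+k₀)) with hC₆_def
  have hC₆1 : (1:ℝ) ≤ C₆ := le_trans (le_max_left _ _) (le_max_left _ _)
  have hC₆0 : (0:ℝ) < C₆ := lt_of_lt_of_le one_pos hC₆1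
  have hC₆a : 2*C₃^2 ≤ C₆ := le_trans (le_max_right _ _) (le_max_left _ _)
  have hC₆c : 2*C₃ ≤ C₆ ^ a := by
    calc 2*C₃ = ((2*C₃) ^ ((1:ℝ)+k₀)) ^ a := by
          rw [← Real.rpow_mul h2C₃.le]
          rw [show ((1:ℝ)+k₀)*a = 1 by rw [ha_def]; field_simp]
          rw [Real.rpow_one]
      _ ≤ C₆ ^ a := Real.rpow_le_rpow (Real.rpow_nonneg h2C₃.le _) (le_max_right _ _) ha.le
  set A : ℝ := CE * C₂ * C_D * (1+2*C₃) ^ δ₂ with hA_def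
  have hrp1 : (1:ℝ) ≤ (1+2*C₃) ^ δ₂ := Real.one_le_rpow (by linarith) hδ₂.le
  have hA0 : 0 < A := by
    rw [hA_def]
    have := Real.rpow_pos_of_pos (show (0:ℝ) < 1+2*C₃ by linarith) δ₂
    positivity
  have hC₂0 : (0:ℝ) < C₂ := lt_of_lt_of_le one_pos hC₂
  have hA1 : CE * C_D ≤ A := by
    calc CE * C_D = CE * 1 * C_D * 1 := by ring
      _ ≤ CE * C₂ * C_D * (1+2*C₃) ^ δ₂ := by
          refine mul_le_mul (mul_le_mul (mul_le_mul_of_nonneg_left hC₂ hCE.le) le_rfl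
            hCD0.le (by positivity)) hrp1 one_pos.le (by positivity)
      _ = A := hA_def.symm
  have hA2 : CE * C₂ * C_D ≤ A := by
    calc CE * C₂ * C_D = CE * C₂ * C_D * 1 := by ring
      _ ≤ CE * C₂ * C_D * (1+2*C₃) ^ δ₂ := by
          refine mul_le_mul_of_nonneg_left hrp1 (by positivity)
      _ = A := hA_def.symm
  have hA3 : CE * C_D * (2*C₃) ^ δ₂ ≤ A := by
    have h1 : (2*C₃) ^ δ₂ ≤ (1+2*C₃) ^ δ₂ :=
      Real.rpow_le_rpow h2C₃.le (by linarith) hδ₂.le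
    have h2 : (0:ℝ) < (2*C₃) ^ δ₂ := Real.rpow_pos_of_pos h2C₃ δ₂
    calc CE * C_D * (2*C₃) ^ δ₂ ≤ CE * C_D * (C₂ * (1+2*C₃) ^ δ₂) := by
          refine mul_le_mul_of_nonneg_left ?_ (by positivity)
          calc (2*C₃) ^ δ₂ = 1 * (2*C₃) ^ δ₂ := (one_mul _).symm
            _ ≤ C₂ * (1+2*C₃) ^ δ₂ := mul_le_mul hC₂ h1 h2.le hC₂0.le
      _ = A := by rw [hA_def]; ring
  -- measurable admissible substitute for ρ
  have hFnn : ∀ x y : X, 0 ≤ C₃ * ρ x ^ a * (ρ x + dist x y) ^ b := fun x y =>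
    mul_nonneg (mul_nonneg hC₃.le (Real.rpow_nonneg (hρ x).le a))
      (Real.rpow_nonneg (add_nonneg (hρ x).le dist_nonneg) b)
  set P : X → ℝ := fun y => ⨅ x, C₃ * ρ x ^ a * (ρ x + dist x y) ^ b with hP_def
  have hbdd : ∀ y, BddBelow (Set.range fun x => C₃ * ρ x ^ a * (ρ x + dist x y) ^ b) :=
    fun y => ⟨0, by rintro - ⟨x, rfl⟩; exact hFnn x y⟩
  have hP1 : ∀ y, ρ y ≤ P y := fun y => le_ciInf fun x => hadm x y
  have hP2 : ∀ y, P y ≤ C₃ * ρ y := by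
    intro y
    have h1 : P y ≤ C₃ * ρ y ^ a * (ρ y + dist y y) ^ b := ciInf_le (hbdd y) y
    have h2 : C₃ * ρ y ^ a * (ρ y + dist y y) ^ b = C₃ * ρ y := by
      rw [dist_self, add_zero, mul_assoc, ← Real.rpow_add (hρ y), hab, Real.rpow_one]
    rwa [h2] at h1
  have hPpos : ∀ y, 0 < P y := fun y => lt_of_lt_of_le (hρ y) (hP1 y)
  have hPmeas : Measurable P := by
    apply measurable_of_Iio
    intro c
    have hset : P ⁻¹' (Set.Iio c) = ⋃ x, {y | C₃ * ρ x ^ a * (ρ x + dist x y) ^ b < c} := by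
      ext y
      simp only [Set.mem_preimage, Set.mem_Iio, Set.mem_iUnion, Set.mem_setOf_eq]
      constructor
      · intro h; exact exists_lt_of_ciInf_lt h
      · rintro ⟨x, hx⟩; exact lt_of_le_of_lt (ciInf_le (hbdd y) x) hx
    rw [hset]
    refine IsOpen.measurableSet (isOpen_iUnion fun x => ?_)
    have hcont : Continuous fun y => C₃ * ρ x ^ a * (ρ x + dist x y) ^ b := by
      refine Continuous.mul continuous_const ?_
      exact ((Real.continuous_rpow_const hb.le).comp
        (continuous_const.add (Continuous.dist continuous_const continuous_id)))
    exact isOpen_lt hcont continuous_const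
  -- the dominating kernel
  set w : ℝ → ℝ := fun s => min 1 (min ((C₆*s) ^ ε) ((C₆/s) ^ δ')) with hw_def
  set K : X → X → ℝ≥0∞ := fun x y =>
    ENNReal.ofReal A * (μ (ball y (dist x y)))⁻¹ * ENNReal.ofReal (w (dist x y / P y))
    with hK_def
  -- pointwise bound: the kernels are dominated by K off the diagonal
  have hpoint : ∀ (x y : X), y ≠ x → ∀ t : ℝ, 0 < t → t < ρ x →
      ENNReal.ofReal (Et t x y) ≤ K x y := by
    intro x y hyx t ht htρ
    have hd : 0 < dist x y := dist_pos.2 (Ne.symm hyx)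
    set d := dist x y with hd_def
    set r := ρ x with hr_def
    have hr : 0 < r := hρ x
    set R := P y with hR_def
    have hR : 0 < R := hPpos y
    have hRρ : ρ y ≤ R := hP1 y
    have hRC : R ≤ C₃ * ρ y := hP2 y
    set m_t := (μ (ball x t)).toReal with hmt_def
    set m_d := (μ (ball x d)).toReal with hmd_def
    set M := (μ (ball y d)).toReal with hM_def
    have hmt : 0 < m_t := hbpos x t ht
    have hmd : 0 < m_d := hbpos x d hd
    have hM0 : 0 < M := hbpos y d hd
    have hMCD : M ≤ C_D * m_d := by
      have hsub : ball y d ⊆ ball x (2*d) := by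
        intro z hz
        rw [mem_ball] at hz ⊢
        have h1 : dist z x ≤ dist z y + dist y x := dist_triangle _ _ _
        rw [dist_comm y x, ← hd_def] at h1
        linarith
      calc M ≤ (μ (ball x (2*d))).toReal :=
            ENNReal.toReal_mono (hbfin _ _) (measure_mono hsub)
        _ ≤ C_D * m_d := hCD x d hd
    set u := t/(t+d) with hu_def
    set v := t/(t+r) with hv_def
    have hu0 : 0 < u := div_pos ht (by linarith)
    have hu1 : u ≤ 1 := by rw [hu_def, div_le_one (by linarith)]; linarith
    have hv0 : 0 < v := div_pos ht (by linarith)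
    have hv1 : v ≤ 1 := by rw [hv_def, div_le_one (by linarith)]; linarith
    have huδ : 0 ≤ u ^ δ₂ := Real.rpow_nonneg hu0.le _
    have hvδ : 0 ≤ v ^ δ₁ := Real.rpow_nonneg hv0.le _
    have huδ1 : u ^ δ₂ ≤ 1 := Real.rpow_le_one hu0.le hu1 hδ₂.le
    have hvδ1 : v ^ δ₁ ≤ 1 := Real.rpow_le_one hv0.le hv1 hδ₁.le
    have hEtsize : Et t x y ≤ CE * (m_t + m_d)⁻¹ * u ^ δ₂ * v ^ δ₁ :=
      le_trans (le_abs_self _) (hsize t x y ht)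
    have hbase_d : Et t x y ≤ CE * m_d⁻¹ * (u ^ δ₂ * v ^ δ₁) := by
      have hinv : (m_t + m_d)⁻¹ ≤ m_d⁻¹ := inv_anti₀ hmd (by linarith)
      have h := mul_le_mul_of_nonneg_left hinv hCE.le
      calc Et t x y ≤ CE * (m_t+m_d)⁻¹ * u^δ₂ * v^δ₁ := hEtsize
        _ ≤ CE * m_d⁻¹ * u^δ₂ * v^δ₁ :=
            mul_le_mul_of_nonneg_right (mul_le_mul_of_nonneg_right h huδ) hvδ
        _ = CE * m_d⁻¹ * (u^δ₂ * v^δ₁) := by ring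
    have hbase_t : Et t x y ≤ CE * m_t⁻¹ * (u ^ δ₂ * v ^ δ₁) := by
      have hinv : (m_t + m_d)⁻¹ ≤ m_t⁻¹ := inv_anti₀ hmt (by linarith)
      have h := mul_le_mul_of_nonneg_left hinv hCE.le
      calc Et t x y ≤ CE * (m_t+m_d)⁻¹ * u^δ₂ * v^δ₁ := hEtsize
        _ ≤ CE * m_t⁻¹ * u^δ₂ * v^δ₁ :=
            mul_le_mul_of_nonneg_right (mul_le_mul_of_nonneg_right h huδ) hvδ
        _ = CE * m_t⁻¹ * (u^δ₂ * v^δ₁) := by ring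
    have hEd : Et t x y * M ≤ CE * C_D * (u ^ δ₂ * v ^ δ₁) := by
      calc Et t x y * M ≤ (CE * m_d⁻¹ * (u^δ₂ * v^δ₁)) * (C_D * m_d) := by
            refine mul_le_mul hbase_d hMCD hM0.le ?_
            have : 0 ≤ m_d⁻¹ := (inv_pos.2 hmd).le
            positivity
        _ = CE * C_D * (u^δ₂ * v^δ₁) * (m_d⁻¹ * m_d) := by ring
        _ = CE * C_D * (u^δ₂ * v^δ₁) := by rw [inv_mul_cancel₀ hmd.ne', mul_one]
    have hG1 : Et t x y * M ≤ CE * C_D := by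
      calc Et t x y * M ≤ CE * C_D * (u^δ₂ * v^δ₁) := hEd
        _ ≤ CE * C_D * 1 := by
            refine mul_le_mul_of_nonneg_left ?_ (by positivity)
            exact mul_le_one₀ huδ1 hvδ hvδ1
        _ = CE * C_D := mul_one _
    -- two admissibility consequences
    have hadm_xy : ρ y ≤ C₃ * r ^ a * (r + d) ^ b := hadm x y
    have hadm_yx : r ≤ C₃ * ρ y ^ a * (ρ y + d) ^ b := by
      have := hadm y x
      rwa [dist_comm y x, ← hd_def, ← hr_def] at this
    have h2b : (2:ℝ)^b ≤ 2 := by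
      calc (2:ℝ)^b ≤ (2:ℝ)^(1:ℝ) := Real.rpow_le_rpow_of_exponent_le one_le_two hb1
        _ = 2 := Real.rpow_one 2
    have h2b0 : (0:ℝ) ≤ (2:ℝ)^b := Real.rpow_nonneg (by norm_num) b
    -- reduce to a real inequality
    have hwform : K x y = ENNReal.ofReal (A * w (d / R) / M) := by
      rw [hK_def]
      simp only
      rw [← hd_def, ← hR_def]
      rw [show μ (ball y d) = ENNReal.ofReal M from (ENNReal.ofReal_toReal (hbfin y d)).symm]
      rw [← ENNReal.ofReal_inv_of_pos hM0, ← ENNReal.ofReal_mul hA0.le,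
        ← ENNReal.ofReal_mul (by positivity)]
      congr 1
      ring
    rw [hwform]
    apply ENNReal.ofReal_le_ofReal
    rw [le_div_iff₀ hM0, hw_def]
    simp only
    apply aux_le_mul_min
    -- first bound : ≤ A * 1
    · rw [mul_one]; exact hG1.trans hA1
    -- second bound : ≤ A * (C₆ * (d/R)) ^ ε
    · rcases le_or_gt R (C₆*d) with hcase | hcase
      · have hone : (1:ℝ) ≤ (C₆*(d/R))^ε := by
          refine Real.one_le_rpow ?_ hε.le
          rw [mul_div_assoc', le_div_iff₀ hR, one_mul]
          exact hcase
        calc Et t x y * M ≤ CE * C_D := hG1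
          _ ≤ A := hA1
          _ ≤ A * (C₆*(d/R))^ε := le_mul_of_one_le_right hA0.le hone
      · -- here C₆ * d < R; first show d < r
        have hdr : d < r := by
          by_contra hcon
          push_neg at hcon
          have h2 : C₃ * r ^ a * (r+d) ^ b ≤ C₃ * d ^ a * (2*d) ^ b := by
            have e1 : r ^ a ≤ d ^ a := Real.rpow_le_rpow hr.le hcon ha.le
            have e2 : (r+d) ^ b ≤ (2*d) ^ b :=
              Real.rpow_le_rpow (by linarith) (by linarith) hb.le
            exact mul_le_mul (mul_le_mul_of_nonneg_left e1 hC₃.le) e2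
              (Real.rpow_nonneg (by linarith) _)
              (mul_nonneg hC₃.le (Real.rpow_nonneg hd.le _))
          have h3 : C₃ * d ^ a * (2*d) ^ b ≤ 2*C₃*d := by
            have e1 : (2*d) ^ b = 2^b * d^b := Real.mul_rpow (by norm_num) hd.le
            calc C₃ * d^a * (2*d)^b = C₃ * 2^b * (d^a * d^b) := by rw [e1]; ring
              _ = C₃ * 2^b * d := by rw [← Real.rpow_add hd, hab, Real.rpow_one]
              _ ≤ C₃ * 2 * d :=
                  mul_le_mul_of_nonneg_right (mul_le_mul_of_nonneg_left h2b hC₃.le) hd.le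
              _ = 2*C₃*d := by ring
          have h4 : R ≤ 2*C₃^2*d := by
            calc R ≤ C₃ * ρ y := hRC
              _ ≤ C₃ * (2*C₃*d) :=
                  mul_le_mul_of_nonneg_left (hadm_xy.trans (h2.trans h3)) hC₃.le
              _ = 2*C₃^2*d := by ring
          have h5 : R ≤ C₆ * d := h4.trans (mul_le_mul_of_nonneg_right hC₆a hd.le)
          linarith
        have hrR : R ≤ C₆ * r := by
          have h2 : C₃ * r ^ a * (r+d) ^ b ≤ 2*C₃*r := by
            have e2 : (r+d) ^ b ≤ (2*r) ^ b :=
              Real.rpow_le_rpow (by linarith) (by linarith) hb.le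
            have e3 : (2*r) ^ b = 2^b * r^b := Real.mul_rpow (by norm_num) hr.le
            calc C₃ * r^a*(r+d)^b ≤ C₃ * r^a * (2^b * r^b) := by
                  rw [← e3]
                  exact mul_le_mul_of_nonneg_left e2
                    (mul_nonneg hC₃.le (Real.rpow_nonneg hr.le _))
              _ = C₃*2^b*(r^a*r^b) := by ring
              _ = C₃*2^b*r := by rw [← Real.rpow_add hr, hab, Real.rpow_one]
              _ ≤ C₃ * 2 * r :=
                  mul_le_mul_of_nonneg_right (mul_le_mul_of_nonneg_left h2b hC₃.le) hr.le
              _ = 2*C₃*r := by ring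
          calc R ≤ C₃ * ρ y := hRC
            _ ≤ C₃ * (2*C₃*r) := mul_le_mul_of_nonneg_left (hadm_xy.trans h2) hC₃.le
            _ = 2*C₃^2*r := by ring
            _ ≤ C₆*r := mul_le_mul_of_nonneg_right hC₆a hr.le
        have hdre : (d/r) ^ ε ≤ (C₆*(d/R)) ^ ε := by
          apply Real.rpow_le_rpow (div_nonneg hd.le hr.le) ?_ hε.le
          rw [mul_div_assoc', div_le_div_iff₀ hr hR]
          calc d * R ≤ d * (C₆ * r) := mul_le_mul_of_nonneg_left hrR hd.le
            _ = C₆ * d * r := by ring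
        have hdr1 : d/r ≤ 1 := by rw [div_le_one hr]; linarith
        have hdr0 : 0 < d/r := div_pos hd hr
        rcases le_or_gt t d with htd | htd
        · -- t ≤ d
          have e1 : v ≤ d/r := by
            have i1 : t/(t+r) ≤ d/(d+r) := by
              rw [div_le_div_iff₀ (by linarith) (by linarith)]
              have hh := mul_le_mul_of_nonneg_right htd hr.le
              linarith
            have i2 : d/(d+r) ≤ d/r := by
              apply div_le_div_of_nonneg_left hd.le hr (by linarith)
            exact i1.trans i2
          have e2 : v ^ δ₁ ≤ (d/r) ^ ε := by
            calc v^δ₁ ≤ (d/r)^δ₁ := Real.rpow_le_rpow hv0.le e1 hδ₁.le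
              _ ≤ (d/r)^ε := Real.rpow_le_rpow_of_exponent_ge hdr0 hdr1 hεδ
          calc Et t x y * M ≤ CE*C_D*(u^δ₂ * v^δ₁) := hEd
            _ ≤ CE*C_D*(d/r)^ε := by
                refine mul_le_mul_of_nonneg_left ?_ (by positivity)
                calc u^δ₂ * v^δ₁ ≤ 1 * (d/r)^ε :=
                      mul_le_mul huδ1 e2 hvδ (by norm_num)
                  _ = (d/r)^ε := one_mul _
            _ ≤ A * (C₆*(d/R))^ε :=
                mul_le_mul hA1 hdre (Real.rpow_nonneg hdr0.le _) hA0.le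
        · -- d < t
          have hrev1 := hrev x d (t/d) hd (by rw [le_div_iff₀ hd]; linarith)
          rw [div_mul_cancel₀ _ hd.ne'] at hrev1
          have htd0 : 0 < t/d := div_pos ht hd
          have hκ0 : (0:ℝ) < (t/d)^κ := Real.rpow_pos_of_pos htd0 κ
          have hc0 : 0 < C₂⁻¹ * (t/d)^κ * m_d := by positivity
          have hmtinv : m_t⁻¹ ≤ (C₂⁻¹ * (t/d)^κ * m_d)⁻¹ := inv_anti₀ hc0 hrev1
          have e0 : (C₂⁻¹ * (t/d)^κ * m_d)⁻¹ = C₂ * ((t/d)^κ)⁻¹ * m_d⁻¹ := by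
            field_simp
          have e1 : ((t/d)^κ)⁻¹ = (d/t)^κ := by
            rw [← Real.inv_rpow htd0.le, inv_div]
          have hdt0 : 0 < d/t := div_pos hd ht
          have hEt2 : Et t x y ≤ CE * (C₂ * (d/t)^κ * m_d⁻¹) * v^δ₁ := by
            have h1 : m_t⁻¹ ≤ C₂ * (d/t)^κ * m_d⁻¹ := by rw [← e1, ← e0]; exact hmtinv
            calc Et t x y ≤ CE * m_t⁻¹ * (u^δ₂ * v^δ₁) := hbase_t
              _ ≤ CE * m_t⁻¹ * (1 * v^δ₁) := by
                  refine mul_le_mul_of_nonneg_left ?_ (by positivity)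
                  exact mul_le_mul_of_nonneg_right huδ1 hvδ
              _ = CE * m_t⁻¹ * v^δ₁ := by rw [one_mul]
              _ ≤ CE * (C₂ * (d/t)^κ * m_d⁻¹) * v^δ₁ :=
                  mul_le_mul_of_nonneg_right (mul_le_mul_of_nonneg_left h1 hCE.le) hvδ
          have e2 : v ^ δ₁ ≤ (t/r)^δ₁ := by
            refine Real.rpow_le_rpow hv0.le ?_ hδ₁.le
            exact div_le_div_of_nonneg_left ht.le hr (by linarith)
          have e3 : (d/t)^κ * (t/r)^δ₁ ≤ (d/r)^ε := by
            have htr0 : 0 < t/r := div_pos ht hr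
            have q1 : (d/t)^κ = (d/t)^(κ-ε) * (d/t)^ε := by
              rw [← Real.rpow_add hdt0]; ring_nf
            have q2 : (t/r)^δ₁ = (t/r)^(δ₁-ε) * (t/r)^ε := by
              rw [← Real.rpow_add htr0]; ring_nf
            have q3 : (d/t)^(κ-ε) ≤ 1 :=
              Real.rpow_le_one hdt0.le (by rw [div_le_one ht]; linarith) (by linarith)
            have q4 : (t/r)^(δ₁-ε) ≤ 1 :=
              Real.rpow_le_one htr0.le (by rw [div_le_one hr]; linarith) (by linarith)
            have q5 : (d/t)^ε * (t/r)^ε = (d/r)^ε := by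
              rw [← Real.mul_rpow hdt0.le htr0.le]
              congr 1
              field_simp
            calc (d/t)^κ*(t/r)^δ₁ = ((d/t)^(κ-ε)*(t/r)^(δ₁-ε))*((d/t)^ε*(t/r)^ε) := by
                  rw [q1, q2]; ring
              _ ≤ 1 * ((d/t)^ε*(t/r)^ε) := by
                  refine mul_le_mul_of_nonneg_right ?_
                    (mul_nonneg (Real.rpow_nonneg hdt0.le _) (Real.rpow_nonneg htr0.le _))
                  exact mul_le_one₀ q3 (Real.rpow_nonneg htr0.le _) q4
              _ = (d/r)^ε := by rw [q5, one_mul]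
          calc Et t x y * M ≤ (CE * (C₂ * (d/t)^κ * m_d⁻¹) * v^δ₁) * (C_D * m_d) := by
                refine mul_le_mul hEt2 hMCD hM0.le ?_
                have h0 : (0:ℝ) ≤ m_d⁻¹ := (inv_pos.2 hmd).le
                positivity
            _ = CE * C₂ * C_D * ((d/t)^κ * v^δ₁) * (m_d⁻¹ * m_d) := by ring
            _ = CE * C₂ * C_D * ((d/t)^κ * v^δ₁) := by
                rw [inv_mul_cancel₀ hmd.ne', mul_one]
            _ ≤ CE * C₂ * C_D * ((d/t)^κ * (t/r)^δ₁) := by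
                refine mul_le_mul_of_nonneg_left ?_ (by positivity)
                exact mul_le_mul_of_nonneg_left e2 (Real.rpow_nonneg hdt0.le _)
            _ ≤ CE * C₂ * C_D * (d/r)^ε := by
                refine mul_le_mul_of_nonneg_left e3 (by positivity)
            _ ≤ A * (C₆*(d/R))^ε :=
                mul_le_mul hA2 hdre (Real.rpow_nonneg hdr0.le _) hA0.le
    -- third bound : ≤ A * (C₆ / (d/R)) ^ δ'
    · have e5 : C₆/(d/R) = C₆*(R/d) := by
        field_simp
      rcases le_or_gt d (C₆*R) with hcase | hcase
      · have hone : (1:ℝ) ≤ (C₆/(d/R))^δ' := by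
          refine Real.one_le_rpow ?_ hδ'0.le
          rw [e5, mul_div_assoc', le_div_iff₀ hd, one_mul]
          exact hcase
        calc Et t x y * M ≤ CE * C_D := hG1
          _ ≤ A := hA1
          _ ≤ A * (C₆/(d/R))^δ' := le_mul_of_one_le_right hA0.le hone
      · -- far regime : C₆ R < d
        have hρyd : ρ y ≤ d := by
          have : R ≤ C₆ * R := le_mul_of_one_le_left hR.le hC₆1
          linarith
        have h1 : r ≤ C₃ * R^a * (2*d)^b := by
          calc r ≤ C₃ * ρ y ^ a * (ρ y + d) ^ b := hadm_yx
            _ ≤ C₃ * R^a * (2*d)^b := by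
                refine mul_le_mul (mul_le_mul_of_nonneg_left
                  (Real.rpow_le_rpow (hρ y).le hRρ ha.le) hC₃.le)
                  (Real.rpow_le_rpow (by linarith [hρ y]) (by linarith [hρ y]) hb.le)
                  (Real.rpow_nonneg (by linarith [hρ y]) _)
                  (mul_nonneg hC₃.le (Real.rpow_nonneg hR.le _))
        have hu_rd : u ≤ r/d := by
          calc u = t/(t+d) := rfl
            _ ≤ t/d := div_le_div_of_nonneg_left ht.le hd (by linarith)
            _ ≤ r/d := by
                rw [div_le_div_iff_of_pos_right hd]
                exact htρ.le
        have hRd0 : 0 < R/d := div_pos hR hd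
        have h3 : r/d ≤ 2*C₃*(R/d)^a := by
          have e1 : (R/d)^a = R^a / d^a := Real.div_rpow hR.le hd.le _
          have hda : 0 < d^a := Real.rpow_pos_of_pos hd a
          have e2 : d^b = d / d^a := by
            rw [eq_div_iff hda.ne', ← Real.rpow_add hd]
            rw [show b + a = 1 by linarith, Real.rpow_one]
          have h2 : C₃ * R^a * (2*d)^b ≤ 2*C₃*R^a*d^b := by
            have e3 : (2*d)^b = 2^b * d^b := Real.mul_rpow (by norm_num) hd.le
            have hdb0 : (0:ℝ) ≤ d^b := Real.rpow_nonneg hd.le b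
            have hRa0 : (0:ℝ) ≤ R^a := Real.rpow_nonneg hR.le a
            rw [e3]
            calc C₃ * R^a * (2^b * d^b) = C₃ * R^a * d^b * 2^b := by ring
              _ ≤ C₃ * R^a * d^b * 2 := by
                  refine mul_le_mul_of_nonneg_left h2b ?_
                  exact mul_nonneg (mul_nonneg hC₃.le hRa0) hdb0
              _ = 2*C₃*R^a*d^b := by ring
          rw [div_le_iff₀ hd]
          calc r ≤ 2*C₃*R^a*d^b := h1.trans h2
            _ = 2*C₃*(R^a/d^a)*d := by rw [e2]; ring
            _ = 2*C₃*(R/d)^a*d := by rw [e1]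
        have hu2 : u^δ₂ ≤ (2*C₃)^δ₂ * ((R/d)^a)^δ₂ := by
          calc u^δ₂ ≤ (2*C₃*(R/d)^a)^δ₂ :=
                Real.rpow_le_rpow hu0.le (hu_rd.trans h3) hδ₂.le
            _ = (2*C₃)^δ₂ * ((R/d)^a)^δ₂ :=
                Real.mul_rpow h2C₃.le (Real.rpow_nonneg hRd0.le a)
        have e4 : ((R/d)^a)^δ₂ = (R/d)^δ' := by
          rw [← Real.rpow_mul hRd0.le]
          congr 1
          rw [hδ'_def]; ring
        have hfinal : Et t x y * M ≤ CE * C_D * (2*C₃)^δ₂ * (R/d)^δ' := by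
          calc Et t x y * M ≤ CE*C_D*(u^δ₂ * v^δ₁) := hEd
            _ ≤ CE*C_D*(u^δ₂ * 1) := by
                refine mul_le_mul_of_nonneg_left
                  (mul_le_mul_of_nonneg_left hvδ1 huδ) (by positivity)
            _ = CE*C_D*u^δ₂ := by rw [mul_one]
            _ ≤ CE*C_D*((2*C₃)^δ₂ * (R/d)^δ') := by
                refine mul_le_mul_of_nonneg_left ?_ (by positivity)
                rw [← e4]
                exact hu2
            _ = CE * C_D * (2*C₃)^δ₂ * (R/d)^δ' := by ring
        have hC₆δ' : (1:ℝ) ≤ C₆^δ' := Real.one_le_rpow hC₆1 hδ'0.le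
        calc Et t x y * M ≤ CE * C_D * (2*C₃)^δ₂ * (R/d)^δ' := hfinal
          _ ≤ (A * C₆^δ') * (R/d)^δ' := by
              refine mul_le_mul_of_nonneg_right ?_ (Real.rpow_nonneg hRd0.le _)
              calc CE * C_D * (2*C₃)^δ₂ ≤ A := hA3
                _ ≤ A * C₆^δ' := le_mul_of_one_le_right hA0.le hC₆δ'
          _ = A * (C₆^δ' * (R/d)^δ') := by ring
          _ = A * (C₆*(R/d))^δ' := by
              rw [← Real.mul_rpow hC₆0.le hRd0.le]
          _ = A * (C₆/(d/R))^δ' := by rw [e5]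
  -- measurability of the kernel
  have hdistm : Measurable fun p : X × X => dist p.1 p.2 := continuous_dist.measurable
  have hballm : Measurable fun p : X × ℝ => μ (ball p.1 p.2) := by
    have hs : MeasurableSet {q : (X × ℝ) × X | dist q.2 q.1.1 < q.1.2} := by
      have : IsOpen {q : (X × ℝ) × X | dist q.2 q.1.1 < q.1.2} :=
        isOpen_lt (Continuous.dist continuous_snd continuous_fst.fst) continuous_fst.snd
      exact this.measurableSet
    have h := measurable_measure_prodMk_left (ν := μ) hs
    exact h
  have hKm : Measurable fun p : X × X => K p.1 p.2 := by
    rw [hK_def]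
    simp only
    have h1 : Measurable fun p : X × X => μ (ball p.2 (dist p.1 p.2)) :=
      hballm.comp (measurable_snd.prodMk hdistm)
    have hsm : Measurable fun p : X × X => dist p.1 p.2 / P p.2 :=
      hdistm.div (hPmeas.comp measurable_snd)
    refine ((measurable_const.mul h1.inv).mul ?_)
    apply Measurable.ennreal_ofReal
    rw [hw_def]
    simp only
    refine measurable_const.min (Measurable.min ?_ ?_)
    · exact (Real.continuous_rpow_const hε.le).measurable.comp (measurable_const.mul hsm)
    · exact (Real.continuous_rpow_const hδ'0.le).measurable.comp (measurable_const.div hsm)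
  -- geometric constants
  set q₁ : ℝ≥0∞ := ENNReal.ofReal ((2:ℝ)^(-ε)) with hq₁_def
  set q₂ : ℝ≥0∞ := ENNReal.ofReal ((2:ℝ)^(-δ')) with hq₂_def
  have hq₁lt : q₁ < 1 := by
    rw [hq₁_def, ENNReal.ofReal_lt_one]
    exact Real.rpow_lt_one_of_one_lt_of_neg one_lt_two (by linarith)
  have hq₂lt : q₂ < 1 := by
    rw [hq₂_def, ENNReal.ofReal_lt_one]
    exact Real.rpow_lt_one_of_one_lt_of_neg one_lt_two (by linarith)
  have hgeom : ∀ q : ℝ≥0∞, q < 1 → (1-q)⁻¹ ≠ ∞ := by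
    intro q hq
    rw [Ne, ENNReal.inv_eq_top, tsub_eq_zero_iff_le]
    exact fun h => absurd hq (not_lt.2 h)
  set T : ℝ≥0∞ := ENNReal.ofReal A * ENNReal.ofReal C_D *
    (ENNReal.ofReal (C₆^ε) * (1-q₁)⁻¹ + ENNReal.ofReal (C₆^δ') * (1-q₂)⁻¹) with hT_def
  have hTne : T ≠ ∞ := by
    rw [hT_def]
    apply ENNReal.mul_ne_top (ENNReal.mul_ne_top ENNReal.ofReal_ne_top ENNReal.ofReal_ne_top)
    exact ENNReal.add_ne_top.2 ⟨ENNReal.mul_ne_top ENNReal.ofReal_ne_top (hgeom _ hq₁lt),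
      ENNReal.mul_ne_top ENNReal.ofReal_ne_top (hgeom _ hq₂lt)⟩
  -- integral bound for the kernel
  have hTy : ∀ y : X, ∫⁻ x, K x y ∂μ ≤ T := by
    intro y
    set R := P y with hR_def
    have hR : 0 < R := hPpos y
    -- per-annulus bound
    have hannint : ∀ j : ℤ,
        ∫⁻ x in {x : X | (2:ℝ)^j * R ≤ dist x y ∧ dist x y < 2^(j+1)*R}, K x y ∂μ ≤
          ENNReal.ofReal A * ENNReal.ofReal C_D *
            ENNReal.ofReal (min ((C₆*2^(j+1))^ε) ((C₆/2^j)^δ')) := by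
      intro j
      set s := (2:ℝ)^j * R with hs_def
      have h2j : (0:ℝ) < (2:ℝ)^j := zpow_pos two_pos j
      have hs : 0 < s := mul_pos h2j hR
      have h2s : (2:ℝ)^(j+1) * R = 2*s := by
        rw [hs_def, zpow_add_one₀ (two_ne_zero)]; ring
      set c : ℝ := min ((C₆*2^(j+1))^ε) ((C₆/2^j)^δ') with hc_def
      have hKb : ∀ x ∈ {x : X | s ≤ dist x y ∧ dist x y < 2^(j+1)*R},
          K x y ≤ ENNReal.ofReal A * (μ (ball y s))⁻¹ * ENNReal.ofReal c := by
        intro x hx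
        obtain ⟨hx1, hx2⟩ := hx
        rw [hK_def]
        simp only
        refine mul_le_mul' (mul_le_mul' le_rfl ?_) ?_
        · exact ENNReal.inv_le_inv' (measure_mono (ball_subset_ball hx1))
        · apply ENNReal.ofReal_le_ofReal
          rw [hw_def]
          simp only
          have hdx : 0 < dist x y := lt_of_lt_of_le hs hx1
          have h1 : (C₆ * (dist x y / R))^ε ≤ (C₆*2^(j+1))^ε := by
            apply Real.rpow_le_rpow (by positivity) ?_ hε.le
            have hlt : dist x y / R < 2^(j+1) := by
              rw [div_lt_iff₀ hR]; linarith
            exact mul_le_mul_of_nonneg_left hlt.le hC₆0.le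
          have h2 : (C₆ / (dist x y / R))^δ' ≤ (C₆/2^j)^δ' := by
            apply Real.rpow_le_rpow (by positivity) ?_ hδ'0.le
            apply div_le_div_of_nonneg_left hC₆0.le h2j
            rw [le_div_iff₀ hR]
            linarith
          calc min 1 (min ((C₆*(dist x y / R))^ε) ((C₆/(dist x y / R))^δ'))
              ≤ min ((C₆*(dist x y / R))^ε) ((C₆/(dist x y / R))^δ') := min_le_right _ _
            _ ≤ c := min_le_min h1 h2
      calc ∫⁻ x in {x : X | s ≤ dist x y ∧ dist x y < 2^(j+1)*R}, K x y ∂μ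
          ≤ ∫⁻ _x in {x : X | s ≤ dist x y ∧ dist x y < 2^(j+1)*R},
              (ENNReal.ofReal A * (μ (ball y s))⁻¹ * ENNReal.ofReal c) ∂μ :=
            setLIntegral_mono measurable_const hKb
        _ = (ENNReal.ofReal A * (μ (ball y s))⁻¹ * ENNReal.ofReal c) *
              μ {x : X | s ≤ dist x y ∧ dist x y < 2^(j+1)*R} := setLIntegral_const _ _
        _ ≤ (ENNReal.ofReal A * (μ (ball y s))⁻¹ * ENNReal.ofReal c) *
              (ENNReal.ofReal C_D * μ (ball y s)) := by
            refine mul_le_mul' le_rfl ?_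
            have hsub : {x : X | s ≤ dist x y ∧ dist x y < 2^(j+1)*R} ⊆ ball y (2*s) := by
              intro x hx
              rw [mem_ball]
              rw [h2s] at hx
              exact hx.2
            have hdou : μ (ball y (2*s)) ≤ ENNReal.ofReal C_D * μ (ball y s) := by
              rw [show μ (ball y (2*s)) = ENNReal.ofReal ((μ (ball y (2*s))).toReal) from
                  (ENNReal.ofReal_toReal (hbfin _ _)).symm,
                show μ (ball y s) = ENNReal.ofReal ((μ (ball y s)).toReal) from
                  (ENNReal.ofReal_toReal (hbfin _ _)).symm,
                ← ENNReal.ofReal_mul hCD0.le]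
              exact ENNReal.ofReal_le_ofReal (hCD y s hs)
            exact (measure_mono hsub).trans hdou
        _ = ENNReal.ofReal A * ENNReal.ofReal C_D * ENNReal.ofReal c *
              ((μ (ball y s))⁻¹ * μ (ball y s)) := by ring
        _ = ENNReal.ofReal A * ENNReal.ofReal C_D * ENNReal.ofReal c := by
            rw [ENNReal.inv_mul_cancel (hballs y s hs).1.ne' (hbfin y s), mul_one]
    -- coverage by annuli
    have hcover : (Set.univ : Set X) ⊆ {y} ∪
        ((⋃ n : ℕ, {x : X | (2:ℝ)^(Int.negSucc n) * R ≤ dist x y ∧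
            dist x y < 2^(Int.negSucc n + 1)*R}) ∪
         (⋃ n : ℕ, {x : X | (2:ℝ)^(n:ℤ) * R ≤ dist x y ∧ dist x y < 2^((n:ℤ)+1)*R})) := by
      intro x _
      rcases eq_or_ne x y with hxy | hxy
      · left; exact hxy
      · have hd : 0 < dist x y := dist_pos.2 hxy
        obtain ⟨j, hj1, hj2⟩ := exists_mem_Ico_zpow (div_pos hd hR) one_lt_two
        have hj1' : (2:ℝ)^j * R ≤ dist x y := (le_div_iff₀ hR).1 hj1
        have hj2' : dist x y < 2^(j+1) * R := by
          rw [div_lt_iff₀ hR] at hj2; exact hj2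
        right
        rcases j with n | n
        · right; exact Set.mem_iUnion.2 ⟨n, ⟨hj1', hj2'⟩⟩
        · left; exact Set.mem_iUnion.2 ⟨n, ⟨hj1', hj2'⟩⟩
    -- sum the annuli
    have hneg : ∀ n : ℕ,
        ENNReal.ofReal (min ((C₆*2^(Int.negSucc n + 1))^ε) ((C₆/2^(Int.negSucc n))^δ')) ≤
          ENNReal.ofReal (C₆^ε) * q₁^n := by
      intro n
      have e1 : (Int.negSucc n + 1 : ℤ) = -(n:ℤ) := by
        rw [Int.negSucc_eq]; ring
      have e2 : ((2:ℝ)^(-(n:ℤ)) : ℝ) = ((2:ℝ)^n)⁻¹ := by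
        rw [zpow_neg, zpow_natCast]
      have h1 : min ((C₆*2^(Int.negSucc n + 1))^ε) ((C₆/2^(Int.negSucc n))^δ') ≤
          C₆^ε * ((2:ℝ)^(-ε))^n := by
        calc min ((C₆*2^(Int.negSucc n + 1))^ε) ((C₆/2^(Int.negSucc n))^δ')
            ≤ (C₆*2^(Int.negSucc n + 1))^ε := min_le_left _ _
          _ = (C₆*((2:ℝ)^n)⁻¹)^ε := by rw [e1, e2]
          _ = C₆^ε * (((2:ℝ)^n)⁻¹)^ε :=
              Real.mul_rpow hC₆0.le (by positivity)
          _ = C₆^ε * ((2:ℝ)^(-ε))^n := by rw [aux_pow_rpow]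
      calc ENNReal.ofReal (min ((C₆*2^(Int.negSucc n + 1))^ε) ((C₆/2^(Int.negSucc n))^δ'))
          ≤ ENNReal.ofReal (C₆^ε * ((2:ℝ)^(-ε))^n) := ENNReal.ofReal_le_ofReal h1
        _ = ENNReal.ofReal (C₆^ε) * q₁^n := by
            rw [ENNReal.ofReal_mul (Real.rpow_nonneg hC₆0.le _), hq₁_def,
              ENNReal.ofReal_pow (Real.rpow_nonneg (by norm_num) _)]
    have hpos : ∀ n : ℕ,
        ENNReal.ofReal (min ((C₆*2^((n:ℤ) + 1))^ε) ((C₆/2^(n:ℤ))^δ')) ≤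
          ENNReal.ofReal (C₆^δ') * q₂^n := by
      intro n
      have e2 : ((2:ℝ)^((n:ℤ)) : ℝ) = (2:ℝ)^n := by rw [zpow_natCast]
      have h1 : min ((C₆*2^((n:ℤ) + 1))^ε) ((C₆/2^(n:ℤ))^δ') ≤
          C₆^δ' * ((2:ℝ)^(-δ'))^n := by
        calc min ((C₆*2^((n:ℤ) + 1))^ε) ((C₆/2^(n:ℤ))^δ')
            ≤ (C₆/2^(n:ℤ))^δ' := min_le_right _ _
          _ = (C₆*((2:ℝ)^n)⁻¹)^δ' := by rw [e2, div_eq_mul_inv]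
          _ = C₆^δ' * (((2:ℝ)^n)⁻¹)^δ' :=
              Real.mul_rpow hC₆0.le (by positivity)
          _ = C₆^δ' * ((2:ℝ)^(-δ'))^n := by rw [aux_pow_rpow]
      calc ENNReal.ofReal (min ((C₆*2^((n:ℤ) + 1))^ε) ((C₆/2^(n:ℤ))^δ'))
          ≤ ENNReal.ofReal (C₆^δ' * ((2:ℝ)^(-δ'))^n) := ENNReal.ofReal_le_ofReal h1
        _ = ENNReal.ofReal (C₆^δ') * q₂^n := by
            rw [ENNReal.ofReal_mul (Real.rpow_nonneg hC₆0.le _), hq₂_def,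
              ENNReal.ofReal_pow (Real.rpow_nonneg (by norm_num) _)]
    calc ∫⁻ x, K x y ∂μ = ∫⁻ x in Set.univ, K x y ∂μ := (setLIntegral_univ _).symm
      _ ≤ ∫⁻ x in {y} ∪
          ((⋃ n : ℕ, {x : X | (2:ℝ)^(Int.negSucc n) * R ≤ dist x y ∧
              dist x y < 2^(Int.negSucc n + 1)*R}) ∪
           (⋃ n : ℕ, {x : X | (2:ℝ)^(n:ℤ) * R ≤ dist x y ∧ dist x y < 2^((n:ℤ)+1)*R})),
            K x y ∂μ := lintegral_mono_set hcover
      _ ≤ (∫⁻ x in ({y} : Set X), K x y ∂μ) + ∫⁻ x in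
          ((⋃ n : ℕ, {x : X | (2:ℝ)^(Int.negSucc n) * R ≤ dist x y ∧
              dist x y < 2^(Int.negSucc n + 1)*R}) ∪
           (⋃ n : ℕ, {x : X | (2:ℝ)^(n:ℤ) * R ≤ dist x y ∧ dist x y < 2^((n:ℤ)+1)*R})),
            K x y ∂μ := lintegral_union_le _ _ _
      _ ≤ 0 + ((∑' n : ℕ, ∫⁻ x in {x : X | (2:ℝ)^(Int.negSucc n) * R ≤ dist x y ∧
              dist x y < 2^(Int.negSucc n + 1)*R}, K x y ∂μ) +
            ∑' n : ℕ, ∫⁻ x in {x : X | (2:ℝ)^(n:ℤ) * R ≤ dist x y ∧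
              dist x y < 2^((n:ℤ)+1)*R}, K x y ∂μ) := by
          refine add_le_add ?_ ((lintegral_union_le _ _ _).trans
            (add_le_add (lintegral_iUnion_le _ _) (lintegral_iUnion_le _ _)))
          rw [Measure.restrict_eq_zero.2 (hsing y), lintegral_zero_measure]
      _ ≤ 0 + ((∑' n : ℕ, ENNReal.ofReal A * ENNReal.ofReal C_D *
              (ENNReal.ofReal (C₆^ε) * q₁^n)) +
            ∑' n : ℕ, ENNReal.ofReal A * ENNReal.ofReal C_D *
              (ENNReal.ofReal (C₆^δ') * q₂^n)) := by
          refine add_le_add le_rfl (add_le_add (ENNReal.tsum_le_tsum fun n => ?_)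
            (ENNReal.tsum_le_tsum fun n => ?_))
          · exact (hannint (Int.negSucc n)).trans
              (mul_le_mul' le_rfl (hneg n))
          · exact (hannint ((n:ℤ))).trans
              (mul_le_mul' le_rfl (hpos n))
      _ = ENNReal.ofReal A * ENNReal.ofReal C_D *
            (ENNReal.ofReal (C₆^ε) * ∑' n : ℕ, q₁^n) +
          ENNReal.ofReal A * ENNReal.ofReal C_D *
            (ENNReal.ofReal (C₆^δ') * ∑' n : ℕ, q₂^n) := by
          rw [zero_add, ENNReal.tsum_mul_left, ENNReal.tsum_mul_left,
            ENNReal.tsum_mul_left, ENNReal.tsum_mul_left]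
      _ = T := by
          rw [hT_def, ENNReal.tsum_geometric, ENNReal.tsum_geometric]
          ring
  -- conclusion
  refine ⟨T.toReal + 1, by positivity, ?_⟩
  intro f hf
  set g := (hf.1).mk f with hg_def
  have hgm : Measurable g := (hf.1.stronglyMeasurable_mk).measurable
  have hfg : f =ᵐ[μ] g := hf.1.ae_eq_mk
  have hstep1 : ∀ x : X,
      (⨆ (t : ℝ) (_ : 0 < t ∧ t < ρ x), ENNReal.ofReal |∫ y, Et t x y * f y ∂μ|) ≤
        ∫⁻ y, K x y * ‖g y‖₊ ∂μ := by
    intro x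
    refine iSup_le fun t => iSup_le fun ht => ?_
    calc ENNReal.ofReal |∫ y, Et t x y * f y ∂μ| = ↑‖∫ y, Et t x y * f y ∂μ‖₊ := by
          rw [← Real.norm_eq_abs]; exact ofReal_norm_eq_enorm _
      _ ≤ ∫⁻ y, ‖Et t x y * f y‖₊ ∂μ := enorm_integral_le_lintegral_enorm _
      _ ≤ ∫⁻ y, K x y * ‖f y‖₊ ∂μ := by
          refine lintegral_mono_ae ?_
          have hae : ∀ᵐ (y : X) ∂μ, y ≠ x := by
            rw [ae_iff]
            have he : {y : X | ¬ y ≠ x} = {x} := by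
              ext z; simp
            rw [he]
            exact hsing x
          filter_upwards [hae] with y hy
          rw [nnnorm_mul, ENNReal.coe_mul]
          refine mul_le_mul' ?_ le_rfl
          rw [← enorm_eq_nnnorm, Real.enorm_eq_ofReal (hEnonneg t x y ht.1)]
          exact hpoint x y hy t ht.1 ht.2
      _ = ∫⁻ y, K x y * ‖g y‖₊ ∂μ := by
          refine lintegral_congr_ae ?_
          filter_upwards [hfg] with y hy
          rw [hy]
  have hjoint : Measurable fun p : X × X => K p.1 p.2 * ‖g p.2‖₊ :=
    hKm.mul ((measurable_coe_nnreal_ennreal.comp hgm.nnnorm).comp measurable_snd)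
  have hInonneg : 0 ≤ ∫ x, |f x| ∂μ := integral_nonneg fun x => abs_nonneg _
  calc ∫⁻ x, ⨆ (t : ℝ) (_ : 0 < t ∧ t < ρ x),
        ENNReal.ofReal |∫ y, Et t x y * f y ∂μ| ∂μ
      ≤ ∫⁻ x, ∫⁻ y, K x y * ‖g y‖₊ ∂μ ∂μ := lintegral_mono hstep1
    _ = ∫⁻ y, ∫⁻ x, K x y * ‖g y‖₊ ∂μ ∂μ := lintegral_lintegral_swap hjoint.aemeasurable
    _ = ∫⁻ y, (∫⁻ x, K x y ∂μ) * ‖g y‖₊ ∂μ :=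
        lintegral_congr fun y => lintegral_mul_const' _ _ ENNReal.coe_ne_top
    _ ≤ ∫⁻ y, T * ‖g y‖₊ ∂μ := lintegral_mono fun y => mul_le_mul' (hTy y) le_rfl
    _ = T * ∫⁻ y, ‖g y‖₊ ∂μ := lintegral_const_mul' _ _ hTne
    _ = T * ∫⁻ y, ‖f y‖₊ ∂μ := by
        congr 1
        refine lintegral_congr_ae ?_
        filter_upwards [hfg] with y hy
        rw [hy]
    _ = T * ENNReal.ofReal (∫ x, ‖f x‖ ∂μ) := by
        exact congrArg (T * ·) (ofReal_integral_norm_eq_lintegral_enorm hf).symm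
    _ ≤ ENNReal.ofReal (T.toReal + 1) * ENNReal.ofReal (∫ x, ‖f x‖ ∂μ) := by
        refine mul_le_mul' ?_ le_rfl
        rw [show T = ENNReal.ofReal T.toReal from (ENNReal.ofReal_toReal hTne).symm]
        exact ENNReal.ofReal_le_ofReal (by
          rw [ENNReal.toReal_ofReal ENNReal.toReal_nonneg]
          linarith)
    _ = ENNReal.ofReal ((T.toReal + 1) * ∫ x, ‖f x‖ ∂μ) :=
        (ENNReal.ofReal_mul (by positivity)).symm
    _ = ENNReal.ofReal ((T.toReal + 1) * ∫ x, |f x| ∂μ) := by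
        simp only [Real.norm_eq_abs]
end
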